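/- arXiv:1805.08796 — 7 statements merged into one kernel-verified Lean document; each statement's English description precedes it below -/
import Mathlib

section
/- For every g ∈ GL_n(𝔽_q), the reflection length ℓ(g) equals the rank of the matrix g − 1, i.e. ℓ(g) = n − dim {v ∈ 𝔽_q^n : g v = v}. -/
open Matrix

variable {F : Type*} [Field F] [Fintype F] [DecidableEq F]

/-- An element of `GL n F` is a reflection if its fixed point subspace has
codimension one, i.e. `s - 1` has rank one. -/
def IsReflection {n : ℕ} (s : GL (Fin n) F) : Prop :=
  ((s : Matrix (Fin n) (Fin n) F) - 1).rank = 1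

/-- The reflection length of `g`: the least `k` such that `g` is a product of
`k` reflections. -/
noncomputable def reflLength {n : ℕ} (g : GL (Fin n) F) : ℕ :=
  sInf {k | ∃ l : List (GL (Fin n) F),
    l.length = k ∧ (∀ s ∈ l, IsReflection s) ∧ l.prod = g}

section Aux

variable {n : ℕ}

/-- Rank is subadditive. -/
lemma myrank_add_le (A B : Matrix (Fin n) (Fin n) F) : (A + B).rank ≤ A.rank + B.rank := by
  classical
  have hle : LinearMap.range (A + B).mulVecLin ≤
      LinearMap.range A.mulVecLin ⊔ LinearMap.range B.mulVecLin := by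
    rintro x ⟨y, rfl⟩
    rw [Matrix.mulVecLin_add]
    exact Submodule.add_mem_sup ⟨y, rfl⟩ ⟨y, rfl⟩
  calc (A + B).rank ≤ Module.finrank F
        (LinearMap.range A.mulVecLin ⊔ LinearMap.range B.mulVecLin : Submodule F (Fin n → F)) :=
        Submodule.finrank_mono hle
    _ ≤ A.rank + B.rank := Submodule.finrank_add_le_finrank_add_finrank _ _

lemma myrank_unit_mul (s : GL (Fin n) F) (M : Matrix (Fin n) (Fin n) F) :
    ((s : Matrix (Fin n) (Fin n) F) * M).rank = M.rank := by
  refine le_antisymm (Matrix.rank_mul_le_right _ _) ?_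
  have h1 : ((s⁻¹ : GL (Fin n) F) : Matrix (Fin n) (Fin n) F) * (s : Matrix (Fin n) (Fin n) F)
      = 1 := by rw [← Units.val_mul]; simp
  have : M = ((s⁻¹ : GL (Fin n) F) : Matrix (Fin n) (Fin n) F) *
      ((s : Matrix (Fin n) (Fin n) F) * M) := by
    rw [← mul_assoc, h1, one_mul]
  conv_lhs => rw [this]
  exact Matrix.rank_mul_le_right _ _

lemma myrank_neg (M : Matrix (Fin n) (Fin n) F) : (-M).rank = M.rank := by
  have u : GL (Fin n) F := 1
  set e : GL (Fin n) F := ⟨-1, -1, by simp, by simp⟩ with he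
  have h : -M = (e : Matrix (Fin n) (Fin n) F) * M := by
    rw [he]; show -M = (-1 : Matrix (Fin n) (Fin n) F) * M; simp
  rw [h, myrank_unit_mul]

lemma IsReflection.inv {s : GL (Fin n) F} (hs : IsReflection s) : IsReflection s⁻¹ := by
  unfold IsReflection at *
  have h1 : ((s⁻¹ : GL (Fin n) F) : Matrix (Fin n) (Fin n) F) * (s : Matrix (Fin n) (Fin n) F)
      = 1 := by rw [← Units.val_mul]; simp
  have h : ((s⁻¹ : GL (Fin n) F) : Matrix (Fin n) (Fin n) F) - 1 =
      ((s⁻¹ : GL (Fin n) F) : Matrix (Fin n) (Fin n) F) *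
        (-((s : Matrix (Fin n) (Fin n) F) - 1)) := by
    rw [mul_neg, mul_sub, mul_one, h1, neg_sub]
  rw [h]
  have h2 := myrank_unit_mul (s⁻¹) (-((s : Matrix (Fin n) (Fin n) F) - 1))
  rw [h2, myrank_neg]
  exact hs

/-- Lower bound: the rank of `l.prod - 1` is at most the length. -/
lemma rank_prod_sub_one_le (l : List (GL (Fin n) F)) (hl : ∀ s ∈ l, IsReflection s) :
    ((l.prod : Matrix (Fin n) (Fin n) F) - 1).rank ≤ l.length := by
  induction l with
  | nil => simp
  | cons a t ih =>
      have h : ((a * t.prod : GL (Fin n) F) : Matrix (Fin n) (Fin n) F) - 1 =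
          (a : Matrix (Fin n) (Fin n) F) * ((t.prod : Matrix (Fin n) (Fin n) F) - 1) +
            ((a : Matrix (Fin n) (Fin n) F) - 1) := by
        push_cast
        rw [mul_sub, mul_one]
        abel
      rw [List.prod_cons, h]
      calc _ ≤ ((a : Matrix (Fin n) (Fin n) F) * ((t.prod : Matrix (Fin n) (Fin n) F) - 1)).rank
            + ((a : Matrix (Fin n) (Fin n) F) - 1).rank := myrank_add_le _ _
        _ ≤ ((t.prod : Matrix (Fin n) (Fin n) F) - 1).rank + 1 := by
            gcongr
            · exact Matrix.rank_mul_le_right _ _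
            · exact le_of_eq (hl a List.mem_cons_self)
        _ ≤ t.length + 1 := by
            have := ih (fun s hs => hl s (List.mem_cons_of_mem a hs))
            omega
        _ = (a :: t).length := by simp

/-- A dual functional vanishing on a subspace and taking value 1 outside it. -/
lemma exists_dual (U : Submodule F (Fin n → F)) {x : Fin n → F} (hx : x ∉ U) :
    ∃ φ : (Fin n → F) →ₗ[F] F, (∀ u ∈ U, φ u = 0) ∧ φ x = 1 := by
  have hq : U.mkQ x ≠ 0 := by
    rw [Ne, Submodule.mkQ_apply, Submodule.Quotient.mk_eq_zero]
    exact hx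
  obtain ⟨ψ, hψ⟩ := (not_forall.mp (fun h => hq ((Module.forall_dual_apply_eq_zero_iff F _).mp h)))
  refine ⟨(ψ (U.mkQ x))⁻¹ • (ψ ∘ₗ U.mkQ), fun u hu => ?_, ?_⟩
  · have h0 : U.mkQ u = 0 := by rw [Submodule.mkQ_apply, Submodule.Quotient.mk_eq_zero]; exact hu
    simp [h0]
  · simp only [LinearMap.smul_apply, LinearMap.comp_apply, smul_eq_mul]
    exact inv_mul_cancel₀ hψ

lemma vecMulVec_mulVec (w u x : Fin n → F) :
    (vecMulVec w u).mulVec x = (u ⬝ᵥ x) • w := by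
  ext i
  simp [Matrix.mulVec, vecMulVec_apply, dotProduct, Finset.mul_sum, mul_comm, mul_assoc,
    mul_left_comm]

lemma vecMulVec_mul_vecMulVec (w u : Fin n → F) :
    vecMulVec w u * vecMulVec w u = (u ⬝ᵥ w) • vecMulVec w u := by
  ext i j
  simp only [Matrix.mul_apply, vecMulVec_apply, Matrix.smul_apply, dotProduct, smul_eq_mul,
    Finset.sum_mul, Finset.mul_sum]
  rw [Finset.sum_congr rfl]
  intro k _
  ring

lemma dot_eq_apply (φ : (Fin n → F) →ₗ[F] F) (x : Fin n → F) :
    (fun i => φ (Pi.single i (1 : F))) ⬝ᵥ x = φ x := by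
  conv_rhs => rw [← Finset.univ_sum_single x]
  rw [map_sum, dotProduct]
  refine Finset.sum_congr rfl fun i _ => ?_
  have h1 : Pi.single i (x i) = x i • (Pi.single i 1 : Fin n → F) := by
    rw [← Pi.single_smul, smul_eq_mul, mul_one]
  rw [h1, LinearMap.map_smul]
  simp [mul_comm]

lemma rank_vecMulVec_one {w u : Fin n → F} (hw : w ≠ 0) (hu : u ≠ 0) :
    (vecMulVec w u).rank = 1 := by
  have hrange : LinearMap.range (vecMulVec w u).mulVecLin = Submodule.span F {w} := by
    apply le_antisymm
    · rintro x ⟨y, rfl⟩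
      rw [Matrix.mulVecLin_apply, _root_.vecMulVec_mulVec]
      exact Submodule.smul_mem _ _ (Submodule.mem_span_singleton_self w)
    · rw [Submodule.span_singleton_le_iff_mem]
      obtain ⟨j, hj⟩ := Function.ne_iff.mp hu
      refine ⟨(u j)⁻¹ • (Pi.single j 1 : Fin n → F), ?_⟩
      rw [Matrix.mulVecLin_apply, Matrix.mulVec_smul, _root_.vecMulVec_mulVec, dotProduct_single]
      simp only [Pi.zero_apply] at hj
      rw [mul_one, smul_smul, inv_mul_cancel₀ (by simpa using hj), one_smul]
  rw [Matrix.rank, hrange, finrank_span_singleton hw]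

lemma eq_zero_of_rank_zero {M : Matrix (Fin n) (Fin n) F} (h : M.rank = 0) : M = 0 := by
  have h2 : LinearMap.range M.mulVecLin = ⊥ := Submodule.finrank_eq_zero.mp h
  ext i j
  have h3 : M.mulVecLin (Pi.single j 1) ∈ LinearMap.range M.mulVecLin :=
    LinearMap.mem_range_self _ _
  rw [h2, Submodule.mem_bot] at h3
  have h4 := congrFun h3 i
  rw [Matrix.mulVecLin_apply, Matrix.mulVec_single] at h4
  simpa using h4

/-- Rank-nullity for matrices. -/
lemma rank_add_ker (M : Matrix (Fin n) (Fin n) F) :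
    M.rank + Module.finrank F (LinearMap.ker M.mulVecLin) = n := by
  rw [Matrix.rank]
  rw [LinearMap.finrank_range_add_finrank_ker M.mulVecLin]
  simp

end Aux

/-- Descent step: if `g ≠ 1`, there is a reflection `σ` with `g = σ * h` and
`rank (h - 1) + 1 = rank (g - 1)`. -/
lemma descent {n : ℕ} (g : GL (Fin n) F) (hg : (g : Matrix (Fin n) (Fin n) F) ≠ 1) :
    ∃ σ h : GL (Fin n) F, IsReflection σ ∧ σ * h = g ∧
      ((h : Matrix (Fin n) (Fin n) F) - 1).rank + 1 = ((g : Matrix (Fin n) (Fin n) F) - 1).rank := by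
  classical
  set G : Matrix (Fin n) (Fin n) F := (g : Matrix (Fin n) (Fin n) F) with hG
  -- find v not fixed
  have hexv : ∃ v, G.mulVec v ≠ v := by
    by_contra h
    push_neg at h
    apply hg
    ext i j
    have := h (Pi.single j (1 : F))
    have h2 := congrFun this i
    rw [Matrix.mulVec_single_one] at h2
    simp only [Matrix.col_apply] at h2
    rw [h2]
    simp [Matrix.one_apply, Pi.single_apply, eq_comm]
  obtain ⟨v, hv⟩ := hexv
  set W : Submodule F (Fin n → F) := LinearMap.ker (G - 1).mulVecLin with hW
  have memW : ∀ x, x ∈ W ↔ G.mulVec x = x := by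
    intro x
    rw [hW, LinearMap.mem_ker, Matrix.mulVecLin_apply, Matrix.sub_mulVec, Matrix.one_mulVec,
      sub_eq_zero]
  have hvW : v ∉ W := fun h => hv ((memW v).mp h)
  have hgvW : G.mulVec v ∉ W := by
    intro h
    have h1 : G.mulVec (G.mulVec v) = G.mulVec v := (memW _).mp h
    apply hv
    set Gi : Matrix (Fin n) (Fin n) F := ((g⁻¹ : GL (Fin n) F) : Matrix (Fin n) (Fin n) F)
      with hGi
    have hinv : Gi * G = 1 := by rw [hGi, hG, ← Units.val_mul]; simp
    calc G.mulVec v = (Gi * G).mulVec (G.mulVec v) := by rw [hinv, Matrix.one_mulVec]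
      _ = Gi.mulVec (G.mulVec (G.mulVec v)) := by rw [← Matrix.mulVec_mulVec]
      _ = Gi.mulVec (G.mulVec v) := by rw [h1]
      _ = (Gi * G).mulVec v := by rw [Matrix.mulVec_mulVec]
      _ = v := by rw [hinv, Matrix.one_mulVec]
  -- find φ with φ|W = 0, φ (Gv) = 1, φ v ≠ 0
  have hφ : ∃ φ : (Fin n → F) →ₗ[F] F, (∀ u ∈ W, φ u = 0) ∧ φ (G.mulVec v) = 1 ∧ φ v ≠ 0 := by
    by_cases hcase : v ∈ W ⊔ Submodule.span F {G.mulVec v}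
    · obtain ⟨φ, hφ0, hφ1⟩ := exists_dual W hgvW
      refine ⟨φ, hφ0, hφ1, ?_⟩
      rw [Submodule.mem_sup] at hcase
      obtain ⟨y, hy, z, hz, hyz⟩ := hcase
      rw [Submodule.mem_span_singleton] at hz
      obtain ⟨c, rfl⟩ := hz
      have hc : c ≠ 0 := by
        rintro rfl
        apply hvW
        rw [← hyz]; simpa using hy
      rw [← hyz, LinearMap.map_add, hφ0 y hy, LinearMap.map_smul, hφ1]
      simpa using hc
    · have hgv2 : G.mulVec v ∉ W ⊔ Submodule.span F {v} := by
        intro h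
        rw [Submodule.mem_sup] at h
        obtain ⟨y, hy, z, hz, hyz⟩ := h
        rw [Submodule.mem_span_singleton] at hz
        obtain ⟨c, rfl⟩ := hz
        rcases eq_or_ne c 0 with rfl | hc
        · apply hgvW; rw [← hyz]; simpa using hy
        · apply hcase
          have hveq : v = c⁻¹ • (G.mulVec v - y) := by
            rw [← hyz]; simp [smul_smul, inv_mul_cancel₀ hc]
          have hmem2 : c⁻¹ • (G.mulVec v - y) ∈ W ⊔ Submodule.span F {G.mulVec v} := by
            refine Submodule.smul_mem _ _ (Submodule.sub_mem _ ?_ ?_)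
            · exact Submodule.mem_sup_right (Submodule.mem_span_singleton_self _)
            · exact Submodule.mem_sup_left hy
          rwa [← hveq] at hmem2
      obtain ⟨φ₁, hφ₁0, hφ₁1⟩ := exists_dual _ hgv2
      obtain ⟨φ₂, hφ₂0, hφ₂1⟩ := exists_dual _ hcase
      refine ⟨φ₁ + φ₂, fun u hu => ?_, ?_, ?_⟩
      · simp [hφ₁0 u (Submodule.mem_sup_left hu), hφ₂0 u (Submodule.mem_sup_left hu)]
      · have h2 : φ₂ (G.mulVec v) = 0 :=
          hφ₂0 _ (Submodule.mem_sup_right (Submodule.mem_span_singleton_self _))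
        simp [hφ₁1, h2]
      · have h1 : φ₁ v = 0 :=
          hφ₁0 _ (Submodule.mem_sup_right (Submodule.mem_span_singleton_self _))
        simp [h1, hφ₂1]
  obtain ⟨φ, hφW, hφgv, hφv⟩ := hφ
  set w : Fin n → F := v - G.mulVec v with hwdef
  have hw : w ≠ 0 := fun h => hv (by rw [hwdef] at h; rw [eq_comm, ← sub_eq_zero]; exact h)
  set u : Fin n → F := fun i => φ (Pi.single i (1 : F)) with hudef
  have hdot : ∀ x, u ⬝ᵥ x = φ x := fun x => dot_eq_apply φ x
  have hu : u ≠ 0 := by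
    intro h
    apply one_ne_zero (α := F)
    rw [← hφgv, ← hdot, h]
    simp
  set c : F := φ v with hcdef
  have hc : c ≠ 0 := hφv
  have huw : u ⬝ᵥ w = c - 1 := by
    rw [hdot, hwdef, LinearMap.map_sub, hφgv, hcdef]
  set P : Matrix (Fin n) (Fin n) F := vecMulVec w u with hPdef
  have hPP : P * P = (c - 1) • P := by rw [hPdef, _root_.vecMulVec_mul_vecMulVec, huw]
  set S : Matrix (Fin n) (Fin n) F := 1 + P with hSdef
  set T : Matrix (Fin n) (Fin n) F := 1 - c⁻¹ • P with hTdef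
  have hST : S * T = 1 := by
    rw [hSdef, hTdef, add_mul, one_mul, mul_sub, mul_one, mul_smul_comm, hPP, smul_smul]
    rw [mul_sub, mul_one, inv_mul_cancel₀ hc]
    module
  have hTS : T * S = 1 := by
    rw [hSdef, hTdef, sub_mul, one_mul, mul_add, mul_one, smul_mul_assoc, hPP, smul_smul]
    rw [mul_sub, mul_one, inv_mul_cancel₀ hc]
    module
  set s : GL (Fin n) F := ⟨S, T, hST, hTS⟩ with hsdef
  have hsrefl : IsReflection s := by
    unfold IsReflection
    have : (s : Matrix (Fin n) (Fin n) F) - 1 = P := by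
      rw [hsdef]
      show S - 1 = P
      rw [hSdef]; abel
    rw [this]
    exact rank_vecMulVec_one hw hu
  refine ⟨s⁻¹, s * g, hsrefl.inv, by group, ?_⟩
  set H : Matrix (Fin n) (Fin n) F := (↑(s * g) : Matrix (Fin n) (Fin n) F) with hHdef
  have hHval : H = S * G := by rw [hHdef]; rfl
  -- kernel inclusion
  have hker : W ⊔ Submodule.span F {v} ≤ LinearMap.ker (H - 1).mulVecLin := by
    rw [sup_le_iff]
    constructor
    · intro x hx
      rw [LinearMap.mem_ker, Matrix.mulVecLin_apply, Matrix.sub_mulVec, Matrix.one_mulVec, hHval,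
        ← Matrix.mulVec_mulVec, (memW x).mp hx, hSdef, Matrix.add_mulVec, Matrix.one_mulVec,
        hPdef, _root_.vecMulVec_mulVec, hdot, hφW x hx]
      simp
    · rw [Submodule.span_singleton_le_iff_mem, LinearMap.mem_ker, Matrix.mulVecLin_apply,
        Matrix.sub_mulVec, Matrix.one_mulVec, hHval, ← Matrix.mulVec_mulVec, hSdef,
        Matrix.add_mulVec, Matrix.one_mulVec, hPdef, _root_.vecMulVec_mulVec, hdot, hφgv, one_smul,
        hwdef]
      abel
  have hvker : v ∈ LinearMap.ker (H - 1).mulVecLin :=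
    hker (Submodule.mem_sup_right (Submodule.mem_span_singleton_self _))
  have hWker : W < LinearMap.ker (H - 1).mulVecLin :=
    lt_of_le_of_ne (le_trans le_sup_left hker) (fun h => hvW (h ▸ hvker))
  have hdim : Module.finrank F W < Module.finrank F (LinearMap.ker (H - 1).mulVecLin) :=
    Submodule.finrank_lt_finrank_of_lt hWker
  -- rank comparison
  have h1 : (H - 1).rank + Module.finrank F (LinearMap.ker (H - 1).mulVecLin) = n :=
    rank_add_ker _
  have h2 : (G - 1).rank + Module.finrank F W = n := rank_add_ker _
  have hle : (H - 1).rank + 1 ≤ (G - 1).rank := by omega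
  have hge : (G - 1).rank ≤ 1 + (H - 1).rank := by
    have hsplit : G - 1 = ((s⁻¹ : GL (Fin n) F) : Matrix (Fin n) (Fin n) F) * (H - 1) +
        (((s⁻¹ : GL (Fin n) F) : Matrix (Fin n) (Fin n) F) - 1) := by
      rw [mul_sub, mul_one, hHval, ← mul_assoc]
      have hinv2 : ((s⁻¹ : GL (Fin n) F) : Matrix (Fin n) (Fin n) F) * S = 1 := by
        show ((s⁻¹ : GL (Fin n) F) : Matrix (Fin n) (Fin n) F) *
          (s : Matrix (Fin n) (Fin n) F) = 1
        rw [← Units.val_mul]; simp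
      rw [hinv2, one_mul]
      abel
    calc (G - 1).rank ≤ (((s⁻¹ : GL (Fin n) F) : Matrix (Fin n) (Fin n) F) * (H - 1)).rank +
          (((s⁻¹ : GL (Fin n) F) : Matrix (Fin n) (Fin n) F) - 1).rank := hsplit ▸ myrank_add_le _ _
      _ ≤ (H - 1).rank + 1 := by
          gcongr
          · exact Matrix.rank_mul_le_right _ _
          · exact le_of_eq hsrefl.inv
      _ = 1 + (H - 1).rank := by omega
  have : ((↑(s * g) : Matrix (Fin n) (Fin n) F) - 1).rank = (H - 1).rank := by rw [← hHdef]
  rw [this]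
  omega

/-- Existence of a reflection factorization of length equal to the rank. -/
lemma exists_factorization {n : ℕ} (r : ℕ) : ∀ (g : GL (Fin n) F),
    ((g : Matrix (Fin n) (Fin n) F) - 1).rank = r →
    ∃ l : List (GL (Fin n) F), l.length = r ∧ (∀ s ∈ l, IsReflection s) ∧ l.prod = g := by
  induction r with
  | zero =>
      intro g hg
      refine ⟨[], rfl, by simp, ?_⟩
      have : (g : Matrix (Fin n) (Fin n) F) - 1 = 0 := eq_zero_of_rank_zero hg
      have hg1 : (g : Matrix (Fin n) (Fin n) F) = 1 := by
        rwa [sub_eq_zero] at this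
      symm
      exact Units.ext hg1
  | succ r ih =>
      intro g hg
      have hne : (g : Matrix (Fin n) (Fin n) F) ≠ 1 := by
        intro h
        rw [h] at hg
        simp at hg
      obtain ⟨σ, h, hσ, hσh, hrank⟩ := descent g hne
      have hr : ((h : Matrix (Fin n) (Fin n) F) - 1).rank = r := by omega
      obtain ⟨l, hl, hlr, hlp⟩ := ih h hr
      refine ⟨σ :: l, by simp [hl], ?_, by rw [List.prod_cons, hlp, hσh]⟩
      intro s hs
      rcases List.mem_cons.mp hs with rfl | hs'
      · exact hσ
      · exact hlr s hs'

/-- The reflection length of `g ∈ GL_n(𝔽_q)` equals the rank of `g - 1`,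
i.e. the codimension of the fixed point subspace of `g`. -/
theorem reflLength_eq_rank {n : ℕ} (g : GL (Fin n) F) :
    reflLength g = ((g : Matrix (Fin n) (Fin n) F) - 1).rank := by
  set r := ((g : Matrix (Fin n) (Fin n) F) - 1).rank with hr
  obtain ⟨l, hl, hlr, hlp⟩ := exists_factorization r g hr.symm
  have hmem : r ∈ {k | ∃ l : List (GL (Fin n) F),
      l.length = k ∧ (∀ s ∈ l, IsReflection s) ∧ l.prod = g} := ⟨l, hl, hlr, hlp⟩
  refine le_antisymm (Nat.sInf_le hmem) ?_
  have hne : {k | ∃ l : List (GL (Fin n) F),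
      l.length = k ∧ (∀ s ∈ l, IsReflection s) ∧ l.prod = g}.Nonempty := ⟨r, hmem⟩
  obtain ⟨l', hl', hlr', hlp'⟩ := Nat.sInf_mem hne
  have := rank_prod_sub_one_le l' hlr'
  rw [hlp', hl'] at this
  exact this
end

section
/- Let g, h ∈ GL_n(𝔽_q). If ℓ(gh) = ℓ(g) + ℓ(h), then ker(g − 1) ∩ ker(h − 1) = ker(gh − 1) and ker(g − 1) + ker(h − 1) = 𝔽_q^n (where ker denotes the fixed-point subspace, i.e. the kernel of the indicated matrix minus the identity). -/
open Matrix

variable {F : Type*} [Field F] [Fintype F] [DecidableEq F]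

namespace ReflAux

open Module

variable {n : ℕ}

lemma rank_add_le (A B : Matrix (Fin n) (Fin n) F) : (A + B).rank ≤ A.rank + B.rank := by
  rw [Matrix.rank, Matrix.rank, Matrix.rank, Matrix.mulVecLin_add]
  have h : LinearMap.range (A.mulVecLin + B.mulVecLin) ≤
      LinearMap.range A.mulVecLin ⊔ LinearMap.range B.mulVecLin := by
    rintro x ⟨y, rfl⟩
    exact Submodule.add_mem_sup ⟨y, rfl⟩ ⟨y, rfl⟩
  exact (Submodule.finrank_mono h).trans
    (Submodule.finrank_add_le_finrank_add_finrank _ _)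

lemma rank_nullity (A : Matrix (Fin n) (Fin n) F) :
    A.rank + finrank F (LinearMap.ker A.mulVecLin) = n := by
  have := LinearMap.finrank_range_add_finrank_ker A.mulVecLin
  rw [Matrix.rank]
  simpa using this

lemma eq_zero_of_rank_eq_zero {A : Matrix (Fin n) (Fin n) F} (h : A.rank = 0) : A = 0 := by
  rw [Matrix.rank, Submodule.finrank_eq_zero, LinearMap.range_eq_bot] at h
  ext i j
  have : A.mulVecLin (Pi.single j 1) i = 0 := by rw [h]; rfl
  simpa [Matrix.mulVecLin_apply, Matrix.mulVec_single] using this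

lemma mulVec_vecMulVec (u p x : Fin n → F) :
    (vecMulVec u p).mulVec x = (p ⬝ᵥ x) • u := by
  ext i
  simp [vecMulVec_apply, mulVec, dotProduct, Finset.mul_sum, mul_comm, mul_assoc, mul_left_comm]

lemma rank_vecMulVec_eq_one {u p : Fin n → F} (hu : u ≠ 0) (hp : p ≠ 0) :
    (vecMulVec u p).rank = 1 := by
  obtain ⟨i0, hi0⟩ := Function.ne_iff.mp hu
  obtain ⟨j0, hj0⟩ := Function.ne_iff.mp hp
  have hle : (vecMulVec u p).rank ≤ 1 := by
    rw [vecMulVec_eq (Fin 1)]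
    exact (Matrix.rank_mul_le_left _ _).trans
      ((Matrix.rank_le_card_width _).trans (by simp))
  have hne : (vecMulVec u p).rank ≠ 0 := by
    intro h
    rw [Matrix.rank, Submodule.finrank_eq_zero, LinearMap.range_eq_bot] at h
    have : (vecMulVec u p).mulVecLin (Pi.single j0 1) i0 = 0 := by rw [h]; rfl
    rcases (by simpa [Matrix.mulVecLin_apply, Matrix.mulVec_single, vecMulVec_apply]
        using this : u i0 = 0 ∨ p j0 = 0) with h' | h'
    · exact hi0 (by simpa using h')
    · exact hj0 (by simpa using h')
  omega

lemma exists_not_mem_two {V : Type*} [AddCommGroup V] [Module F V]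
    (p q : Submodule F V) (hp : p ≠ ⊤) (hq : q ≠ ⊤) : ∃ v, v ∉ p ∧ v ∉ q := by
  obtain ⟨a, ha⟩ : ∃ a, a ∉ p := by
    by_contra hc; push_neg at hc; exact hp (Submodule.eq_top_iff'.2 hc)
  obtain ⟨b, hb⟩ : ∃ b, b ∉ q := by
    by_contra hc; push_neg at hc; exact hq (Submodule.eq_top_iff'.2 hc)
  by_cases haq : a ∈ q
  · by_cases hbp : b ∈ p
    · refine ⟨a + b, fun hab => ha ?_, fun hab => hb ?_⟩
      · simpa using p.sub_mem hab hbp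
      · simpa using q.sub_mem hab haq
    · exact ⟨b, hbp, hb⟩
  · exact ⟨a, ha, haq⟩

lemma dot_single (φ : Module.Dual F (Fin n → F)) (x : Fin n → F) :
    (fun i => φ (Pi.single i 1)) ⬝ᵥ x = φ x := by
  have h : x = ∑ i, x i • (Pi.single i 1 : Fin n → F) := by
    funext j
    simp [Finset.sum_apply, Pi.single_apply]
  conv_rhs => rw [h, map_sum]
  simp [dotProduct, mul_comm]

/-- Lower bound: the rank of `g - 1` is at most the length of any reflection
factorization of `g`. -/
lemma rank_le_length (l : List (GL (Fin n) F)) (hl : ∀ s ∈ l, IsReflection s) :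
    ((l.prod : Matrix (Fin n) (Fin n) F) - 1).rank ≤ l.length := by
  induction l with
  | nil => simp
  | cons s t ih =>
    have hs : IsReflection s := hl s List.mem_cons_self
    have ht := ih fun x hx => hl x (List.mem_cons_of_mem s hx)
    rw [List.prod_cons]
    set A : Matrix (Fin n) (Fin n) F := (s : Matrix (Fin n) (Fin n) F)
    set B : Matrix (Fin n) (Fin n) F := (t.prod : Matrix (Fin n) (Fin n) F)
    have hcoe : ((s * t.prod : GL (Fin n) F) : Matrix (Fin n) (Fin n) F) = A * B := rfl
    have hdecomp : A * B - 1 = A * (B - 1) + (A - 1) := by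
      rw [Matrix.mul_sub, Matrix.mul_one]; abel
    rw [hcoe, hdecomp]
    calc (A * (B - 1) + (A - 1)).rank ≤ (A * (B - 1)).rank + (A - 1).rank :=
          rank_add_le _ _
      _ ≤ (B - 1).rank + 1 := by
          have h1 := Matrix.rank_mul_le_right A (B - 1)
          rw [hs]
          omega
      _ ≤ t.length + 1 := by omega
      _ = (s :: t).length := by simp

/-- Upper bound: `g` is a product of at most `rank (g - 1)` reflections. -/
lemma exists_list : ∀ d (g : GL (Fin n) F),
    ((g : Matrix (Fin n) (Fin n) F) - 1).rank ≤ d →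
    ∃ l : List (GL (Fin n) F), (∀ s ∈ l, IsReflection s) ∧ l.prod = g ∧
      l.length ≤ ((g : Matrix (Fin n) (Fin n) F) - 1).rank := by
  intro d
  induction d with
  | zero =>
    intro g hg
    have h0 : ((g : Matrix (Fin n) (Fin n) F) - 1).rank = 0 := Nat.le_zero.mp hg
    have : (g : Matrix (Fin n) (Fin n) F) = 1 := by
      have := eq_zero_of_rank_eq_zero h0
      rwa [sub_eq_zero] at this
    refine ⟨[], by simp, ?_, by simp⟩
    symm
    exact Units.ext (by simpa using this)
  | succ d ih =>
    intro g hg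
    by_cases h0 : ((g : Matrix (Fin n) (Fin n) F) - 1).rank = 0
    · have : (g : Matrix (Fin n) (Fin n) F) = 1 := by
        have := eq_zero_of_rank_eq_zero h0
        rwa [sub_eq_zero] at this
      refine ⟨[], by simp, ?_, by simp⟩
      symm
      exact Units.ext (by simpa using this)
    set A : Matrix (Fin n) (Fin n) F := (g : Matrix (Fin n) (Fin n) F) with hA
    set W := LinearMap.ker (A - 1).mulVecLin with hWdef
    have hrn := rank_nullity (A - 1)
    rw [← hWdef] at hrn
    have hWlt : W < ⊤ := by
      rcases lt_or_eq_of_le (le_top : W ≤ ⊤) with h | h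
      · exact h
      · exfalso
        apply h0
        have hfW : finrank F W = n := by
          rw [h]
          simp [finrank_top, Module.finrank_fin_fun]
        omega
    obtain ⟨φ, hφ0, hφW⟩ := W.exists_dual_map_eq_bot_of_lt_top hWlt inferInstance
    have hφW' : ∀ w ∈ W, φ w = 0 := fun w hw => by
      have : φ w ∈ W.map φ := Submodule.mem_map_of_mem hw
      rwa [hφW, Submodule.mem_bot] at this
    have hker1 : LinearMap.ker φ ≠ ⊤ := fun h => hφ0 (LinearMap.ker_eq_top.mp h)
    have hker2 : LinearMap.ker (φ ∘ₗ A.mulVecLin) ≠ ⊤ := by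
      intro h
      obtain ⟨y, hy⟩ := DFunLike.ne_iff.mp hφ0
      apply hy
      have hmem : ((g⁻¹ : GL (Fin n) F) : Matrix (Fin n) (Fin n) F).mulVec y ∈
          LinearMap.ker (φ ∘ₗ A.mulVecLin) := h ▸ Submodule.mem_top
      have := LinearMap.mem_ker.mp hmem
      simp only [LinearMap.comp_apply, Matrix.mulVecLin_apply] at this
      rwa [Matrix.mulVec_mulVec, hA, ← Units.val_mul, mul_inv_cancel, Units.val_one,
        Matrix.one_mulVec] at this
    obtain ⟨v, hv1, hv2⟩ := exists_not_mem_two _ _ hker1 hker2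
    have hφv : φ v ≠ 0 := fun h => hv1 (LinearMap.mem_ker.mpr h)
    have hφAv : φ (A.mulVec v) ≠ 0 := fun h => hv2 (LinearMap.mem_ker.mpr (by
      simp only [LinearMap.comp_apply, Matrix.mulVecLin_apply]; exact h))
    set c := φ (A.mulVec v) with hc
    set e := φ v with he
    set u := v - A.mulVec v with hu
    have hu0 : u ≠ 0 := by
      intro h
      apply hφv
      apply hφW' v
      rw [hWdef, LinearMap.mem_ker, Matrix.mulVecLin_apply, Matrix.sub_mulVec,
        Matrix.one_mulVec]
      rw [hu] at h
      rw [sub_eq_zero] at h ⊢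
      exact h.symm
    set p : Fin n → F := fun i => φ (Pi.single i 1) with hpdef
    have hdot : ∀ x, p ⬝ᵥ x = φ x := dot_single φ
    have hp0 : p ≠ 0 := by
      intro hzero
      apply hφv
      rw [he, ← hdot v, hzero]
      simp
    have hpu : p ⬝ᵥ u = e - c := by rw [hdot, hu, map_sub]
    set R := vecMulVec u p with hRdef
    have key : R * R = (e - c) • R := by
      rw [← hpu, hRdef]
      ext i j
      simp only [Matrix.mul_apply, vecMulVec_apply, Matrix.smul_apply, dotProduct, smul_eq_mul,
        Finset.sum_mul, Finset.mul_sum]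
      apply Finset.sum_congr rfl
      intros; ring
    have expand : ∀ a b : F, (1 + a • R) * (1 + b • R) = 1 + (a + b + a * b * (e - c)) • R := by
      intro a b
      have h2 : (a • R) * (b • R) = (a * b * (e - c)) • R := by
        rw [smul_mul_assoc, mul_smul_comm, key, smul_smul, smul_smul]
      rw [mul_add, add_mul, add_mul, h2, add_smul, add_smul]
      simp only [one_mul, mul_one]
      abel
    have hST : (1 + c⁻¹ • R) * (1 + (-e⁻¹) • R) = 1 := by
      rw [expand, show c⁻¹ + -e⁻¹ + c⁻¹ * -e⁻¹ * (e - c) = 0 by field_simp; try ring]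
      simp
    have hTS : (1 + (-e⁻¹) • R) * (1 + c⁻¹ • R) = 1 := by
      rw [expand, show -e⁻¹ + c⁻¹ + -e⁻¹ * c⁻¹ * (e - c) = 0 by field_simp; try ring]
      simp
    set s : GL (Fin n) F := ⟨1 + c⁻¹ • R, 1 + (-e⁻¹) • R, hST, hTS⟩ with hsdef
    have hsinv : IsReflection s⁻¹ := by
      show (((s⁻¹ : GL (Fin n) F) : Matrix (Fin n) (Fin n) F) - 1).rank = 1
      have hval : ((s⁻¹ : GL (Fin n) F) : Matrix (Fin n) (Fin n) F) = 1 + (-e⁻¹) • R := rfl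
      have heq : (1 + (-e⁻¹) • R) - 1 = vecMulVec ((-e⁻¹) • u) p := by
        ext i j
        simp only [Matrix.sub_apply, Matrix.add_apply, Matrix.smul_apply, hRdef,
          vecMulVec_apply, Pi.smul_apply, smul_eq_mul]
        ring
      rw [hval, heq]
      exact rank_vecMulVec_eq_one
        (smul_ne_zero (neg_ne_zero.mpr (inv_ne_zero hφv)) hu0) hp0
    -- the fixed space of s * g strictly contains that of g
    have hcoe : ((s * g : GL (Fin n) F) : Matrix (Fin n) (Fin n) F) = (1 + c⁻¹ • R) * A := rfl
    set W' := LinearMap.ker ((1 + c⁻¹ • R) * A - 1).mulVecLin with hW'def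
    have hWW' : W ≤ W' := by
      intro w hw
      have hAw : A.mulVec w = w := by
        have := LinearMap.mem_ker.mp hw
        rw [Matrix.mulVecLin_apply, Matrix.sub_mulVec, Matrix.one_mulVec, sub_eq_zero] at this
        exact this
      have hφw : φ w = 0 := hφW' w hw
      rw [hW'def, LinearMap.mem_ker, Matrix.mulVecLin_apply, Matrix.sub_mulVec,
        Matrix.one_mulVec, ← Matrix.mulVec_mulVec, hAw, Matrix.add_mulVec,
        Matrix.one_mulVec, Matrix.smul_mulVec, mulVec_vecMulVec, hdot, hφw]
      simp
    have hvW' : v ∈ W' := by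
      rw [hW'def, LinearMap.mem_ker, Matrix.mulVecLin_apply, Matrix.sub_mulVec,
        Matrix.one_mulVec, ← Matrix.mulVec_mulVec, Matrix.add_mulVec, Matrix.one_mulVec,
        Matrix.smul_mulVec, mulVec_vecMulVec, hdot]
      rw [← hc, smul_smul, inv_mul_cancel₀ hφAv, one_smul, hu]
      abel
    have hvnW : v ∉ W := fun h => hφv (hφW' v h)
    have hlt : W < W' := lt_of_le_of_ne hWW' (fun h => hvnW (h ▸ hvW'))
    have hrank' : ((1 + c⁻¹ • R) * A - 1).rank < (A - 1).rank := by
      have h1 := rank_nullity ((1 + c⁻¹ • R) * A - 1)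
      have h2 := Submodule.finrank_lt_finrank_of_lt hlt
      rw [← hW'def] at h1
      omega
    obtain ⟨l', hl'refl, hl'prod, hl'len⟩ := ih (s * g) (by
      rw [hcoe]
      omega)
    refine ⟨s⁻¹ :: l', ?_, ?_, ?_⟩
    · intro x hx
      rcases List.mem_cons.mp hx with h | h
      · subst h; exact hsinv
      · exact hl'refl x h
    · rw [List.prod_cons, hl'prod, inv_mul_cancel_left]
    · have : ((s * g : GL (Fin n) F) : Matrix (Fin n) (Fin n) F) = (1 + c⁻¹ • R) * A := rfl
      rw [this] at hl'len
      simp only [List.length_cons]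
      omega

/-- The reflection length equals the rank of `g - 1`. -/
lemma reflLength_eq (g : GL (Fin n) F) :
    reflLength g = ((g : Matrix (Fin n) (Fin n) F) - 1).rank := by
  obtain ⟨l, hrefl, hprod, hlen⟩ :=
    exists_list (((g : Matrix (Fin n) (Fin n) F) - 1).rank) g le_rfl
  unfold reflLength
  have hmem : l.length ∈ {k | ∃ l' : List (GL (Fin n) F),
      l'.length = k ∧ (∀ s ∈ l', IsReflection s) ∧ l'.prod = g} := ⟨l, rfl, hrefl, hprod⟩
  apply le_antisymm
  · exact le_trans (Nat.sInf_le hmem) hlen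
  · apply le_csInf ⟨l.length, hmem⟩
    rintro k ⟨l', rfl, hrefl', hprod'⟩
    rw [← hprod']
    exact rank_le_length l' hrefl'

lemma ker_toLin'_eq (X : Matrix (Fin n) (Fin n) F) :
    LinearMap.ker (Matrix.toLin' X) = LinearMap.ker X.mulVecLin := by
  ext x
  simp [Matrix.toLin'_apply, Matrix.mulVecLin_apply]

end ReflAux

/-- If `ℓ(gh) = ℓ(g) + ℓ(h)`, then the fixed point subspaces satisfy
`V^g ∩ V^h = V^{gh}` and `V^g + V^h = 𝔽_q^n`. -/
theorem fixed_spaces_of_length_add {n : ℕ} (g h : GL (Fin n) F)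
    (hlen : reflLength (g * h) = reflLength g + reflLength h) :
    LinearMap.ker (Matrix.toLin' ((g : Matrix (Fin n) (Fin n) F) - 1)) ⊓
        LinearMap.ker (Matrix.toLin' ((h : Matrix (Fin n) (Fin n) F) - 1)) =
      LinearMap.ker (Matrix.toLin'
        (((g * h : GL (Fin n) F) : Matrix (Fin n) (Fin n) F) - 1)) ∧
    LinearMap.ker (Matrix.toLin' ((g : Matrix (Fin n) (Fin n) F) - 1)) ⊔
        LinearMap.ker (Matrix.toLin' ((h : Matrix (Fin n) (Fin n) F) - 1)) = ⊤ := by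
  open Module ReflAux in
  rw [reflLength_eq, reflLength_eq, reflLength_eq] at hlen
  rw [ker_toLin'_eq, ker_toLin'_eq, ker_toLin'_eq]
  set A : Matrix (Fin n) (Fin n) F := (g : Matrix (Fin n) (Fin n) F) with hA
  set B : Matrix (Fin n) (Fin n) F := (h : Matrix (Fin n) (Fin n) F) with hB
  have hcoe : ((g * h : GL (Fin n) F) : Matrix (Fin n) (Fin n) F) = A * B := rfl
  set Kg := LinearMap.ker (A - 1).mulVecLin with hKg
  set Kh := LinearMap.ker (B - 1).mulVecLin with hKh
  set Kgh := LinearMap.ker (((g * h : GL (Fin n) F) : Matrix (Fin n) (Fin n) F) - 1).mulVecLin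
    with hKgh
  have h1 : Kg ⊓ Kh ≤ Kgh := by
    rintro x ⟨hxg, hxh⟩
    have hxg' : A.mulVec x = x := by
      have := LinearMap.mem_ker.mp hxg
      rwa [Matrix.mulVecLin_apply, Matrix.sub_mulVec, Matrix.one_mulVec, sub_eq_zero] at this
    have hxh' : B.mulVec x = x := by
      have := LinearMap.mem_ker.mp hxh
      rwa [Matrix.mulVecLin_apply, Matrix.sub_mulVec, Matrix.one_mulVec, sub_eq_zero] at this
    rw [hKgh, LinearMap.mem_ker, Matrix.mulVecLin_apply, Matrix.sub_mulVec, Matrix.one_mulVec,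
      hcoe, ← Matrix.mulVec_mulVec, hxh', hxg', sub_self]
  have ra := rank_nullity (A - 1)
  have rb := rank_nullity (B - 1)
  have rc := rank_nullity (((g * h : GL (Fin n) F) : Matrix (Fin n) (Fin n) F) - 1)
  rw [← hKg] at ra
  rw [← hKh] at rb
  rw [← hKgh] at rc
  have hmono : finrank F ↥(Kg ⊓ Kh) ≤ finrank F ↥Kgh := Submodule.finrank_mono h1
  have hsupinf : finrank F ↥(Kg ⊔ Kh) + finrank F ↥(Kg ⊓ Kh)
      = finrank F ↥Kg + finrank F ↥Kh := Submodule.finrank_sup_add_finrank_inf_eq _ _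
  have hsuple : finrank F ↥(Kg ⊔ Kh) ≤ n := by
    have := Submodule.finrank_le (Kg ⊔ Kh)
    rwa [Module.finrank_fin_fun] at this
  constructor
  · exact Submodule.eq_of_le_of_finrank_eq h1 (by omega)
  · apply Submodule.eq_top_of_finrank_eq
    rw [Module.finrank_fin_fun]
    omega
end

section
/- Let k ≤ n and let ḡ ∈ GL_k(𝔽_q) satisfy ker(ḡ − 1) ⊆ im(ḡ − 1) (equivalently, every Jordan block of ḡ with eigenvalue 1 has size at least 2). Let g = ḡ ⊕ I_{n−k} ∈ GL_n(𝔽_q). Then the centralizer of g in GL_n(𝔽_q) consists exactly of the block matrices [[A, B], [C, D]] (with A of size k×k, B of size k×(n−k), C of size (n−k)×k, D of size (n−k)×(n−k)) such that A ∈ GL_k(𝔽_q) with Aḡ = ḡA, D ∈ GL_{n−k}(𝔽_q), ḡB = B, and Cḡ = C. -/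
open Matrix

variable {F : Type*} [Field F] [Fintype F] [DecidableEq F]

/-- The `(k+m) × (k+m)` block matrix `[[A, B], [C, D]]`. -/
def blockMat {k m : ℕ} (A : Matrix (Fin k) (Fin k) F) (B : Matrix (Fin k) (Fin m) F)
    (C : Matrix (Fin m) (Fin k) F) (D : Matrix (Fin m) (Fin m) F) :
    Matrix (Fin (k + m)) (Fin (k + m)) F :=
  Matrix.reindex finSumFinEquiv finSumFinEquiv (Matrix.fromBlocks A B C D)

set_option linter.unusedSectionVars false

lemma blockMat_mul {k m : ℕ} (A : Matrix (Fin k) (Fin k) F) (B : Matrix (Fin k) (Fin m) F)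
    (C : Matrix (Fin m) (Fin k) F) (D : Matrix (Fin m) (Fin m) F)
    (A' : Matrix (Fin k) (Fin k) F) (B' : Matrix (Fin k) (Fin m) F)
    (C' : Matrix (Fin m) (Fin k) F) (D' : Matrix (Fin m) (Fin m) F) :
    blockMat A B C D * blockMat A' B' C' D' =
      blockMat (A * A' + B * C') (A * B' + B * D') (C * A' + D * C') (C * B' + D * D') := by
  simp only [blockMat, reindex_apply, submatrix_mul_equiv, fromBlocks_multiply]

lemma blockMat_submatrix {k m : ℕ} (A : Matrix (Fin k) (Fin k) F) (B : Matrix (Fin k) (Fin m) F)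
    (C : Matrix (Fin m) (Fin k) F) (D : Matrix (Fin m) (Fin m) F) :
    (blockMat A B C D).submatrix finSumFinEquiv finSumFinEquiv = fromBlocks A B C D := by
  simp [blockMat, reindex_apply, submatrix_submatrix]

/-- If columns of `Y` lie in `ker (g-1) ⊆ im (g-1)` and `Z * (g-1) = 0` then `Z * Y = 0`. -/
lemma aux_zero {k p q : ℕ} (g : Matrix (Fin k) (Fin k) F)
    (hg : LinearMap.ker (Matrix.toLin' (g - 1)) ≤ LinearMap.range (Matrix.toLin' (g - 1)))
    (Y : Matrix (Fin k) (Fin p) F) (hY : (g - 1) * Y = 0)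
    (Z : Matrix (Fin q) (Fin k) F) (hZ : Z * (g - 1) = 0) : Z * Y = 0 := by
  ext i j
  have hker : (fun l => Y l j) ∈ LinearMap.ker (Matrix.toLin' (g - 1)) := by
    rw [LinearMap.mem_ker, Matrix.toLin'_apply]
    ext i'
    have := congrFun (congrFun hY i') j
    simpa [mulVec, mul_apply, dotProduct] using this
  obtain ⟨x, hx⟩ := hg hker
  rw [Matrix.toLin'_apply] at hx
  have h1 : (Z * Y) i j = (Z *ᵥ fun l => Y l j) i := by
    simp [mul_apply, mulVec, dotProduct]
  rw [h1, ← hx, mulVec_mulVec, hZ, zero_mulVec]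
  rfl

/-- Let `ḡ ∈ GL_k(𝔽_q)` with `ker(ḡ - 1) ⊆ im(ḡ - 1)`, and `g = ḡ ⊕ I_{n-k}`.
The centralizer of `g` in `GL_n(𝔽_q)` consists exactly of the invertible block
matrices `[[A, B], [C, D]]` with `A` invertible commuting with `ḡ`, `D`
invertible, `ḡB = B`, and `Cḡ = C`. -/
theorem centralizer_block_description {k m : ℕ} (g0 : GL (Fin k) F)
    (hg : LinearMap.ker (Matrix.toLin' ((g0 : Matrix (Fin k) (Fin k) F) - 1)) ≤
      LinearMap.range (Matrix.toLin' ((g0 : Matrix (Fin k) (Fin k) F) - 1)))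
    (M : GL (Fin (k + m)) F) :
    ((M : Matrix (Fin (k + m)) (Fin (k + m)) F) *
        blockMat (g0 : Matrix (Fin k) (Fin k) F) 0 0 1 =
      blockMat (g0 : Matrix (Fin k) (Fin k) F) 0 0 1 *
        (M : Matrix (Fin (k + m)) (Fin (k + m)) F)) ↔
    ∃ (A : GL (Fin k) F) (D : GL (Fin m) F) (B : Matrix (Fin k) (Fin m) F)
        (C : Matrix (Fin m) (Fin k) F),
      (M : Matrix (Fin (k + m)) (Fin (k + m)) F) =
        blockMat (A : Matrix (Fin k) (Fin k) F) B C (D : Matrix (Fin m) (Fin m) F) ∧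
      (A : Matrix (Fin k) (Fin k) F) * (g0 : Matrix (Fin k) (Fin k) F) =
        (g0 : Matrix (Fin k) (Fin k) F) * (A : Matrix (Fin k) (Fin k) F) ∧
      (g0 : Matrix (Fin k) (Fin k) F) * B = B ∧
      C * (g0 : Matrix (Fin k) (Fin k) F) = C := by
  have e := @finSumFinEquiv k m
  constructor
  · intro h
    set g : Matrix (Fin k) (Fin k) F := (g0 : Matrix (Fin k) (Fin k) F) with hgdef
    set G : Matrix (Fin (k+m)) (Fin (k+m)) F := blockMat g 0 0 1 with hG
    set P : Matrix (Fin (k+m)) (Fin (k+m)) F := (M : Matrix (Fin (k+m)) (Fin (k+m)) F) with hP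
    set Q : Matrix (Fin (k+m)) (Fin (k+m)) F := (M⁻¹).val with hQ
    have hPQ : P * Q = 1 := by rw [hP, hQ, ← Units.val_mul, mul_inv_cancel, Units.val_one]
    have hQP : Q * P = 1 := by rw [hP, hQ, ← Units.val_mul, inv_mul_cancel, Units.val_one]
    have hcomm' : Q * G = G * Q := by
      calc Q * G = Q * G * (P * Q) := by rw [hPQ, mul_one]
        _ = Q * (G * P) * Q := by noncomm_ring
        _ = Q * (P * G) * Q := by rw [h]
        _ = (Q * P) * (G * Q) := by noncomm_ring
        _ = G * Q := by rw [hQP, one_mul]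
    set N : Matrix (Fin k ⊕ Fin m) (Fin k ⊕ Fin m) F :=
      P.submatrix finSumFinEquiv finSumFinEquiv with hN
    set N' : Matrix (Fin k ⊕ Fin m) (Fin k ⊕ Fin m) F :=
      Q.submatrix finSumFinEquiv finSumFinEquiv with hN'
    set A := N.toBlocks₁₁ with hA0
    set B := N.toBlocks₁₂ with hB0
    set C := N.toBlocks₂₁ with hC0
    set D := N.toBlocks₂₂ with hD0
    set A' := N'.toBlocks₁₁ with hA0'
    set B' := N'.toBlocks₁₂ with hB0'
    set C' := N'.toBlocks₂₁ with hC0'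
    set D' := N'.toBlocks₂₂ with hD0'
    have hNb : N = fromBlocks A B C D := (fromBlocks_toBlocks N).symm
    have hNb' : N' = fromBlocks A' B' C' D' := (fromBlocks_toBlocks N').symm
    have hGsub : G.submatrix finSumFinEquiv finSumFinEquiv = fromBlocks g 0 0 1 := by
      rw [hG, blockMat_submatrix]
    -- transfer commutation to block form
    have block_comm : ∀ (X : Matrix (Fin (k+m)) (Fin (k+m)) F), X * G = G * X →
        X.submatrix finSumFinEquiv finSumFinEquiv * fromBlocks g 0 0 1 =
          fromBlocks g 0 0 1 * X.submatrix finSumFinEquiv finSumFinEquiv := by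
      intro X hX
      calc X.submatrix finSumFinEquiv finSumFinEquiv * fromBlocks g 0 0 1
          = X.submatrix finSumFinEquiv finSumFinEquiv *
              G.submatrix finSumFinEquiv finSumFinEquiv := by rw [hGsub]
        _ = (X * G).submatrix finSumFinEquiv finSumFinEquiv :=
            submatrix_mul_equiv _ _ _ _ _
        _ = (G * X).submatrix finSumFinEquiv finSumFinEquiv := by rw [hX]
        _ = G.submatrix finSumFinEquiv finSumFinEquiv *
              X.submatrix finSumFinEquiv finSumFinEquiv :=
            (submatrix_mul_equiv _ _ _ _ _).symm
        _ = fromBlocks g 0 0 1 * X.submatrix finSumFinEquiv finSumFinEquiv := by rw [hGsub]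
    have hcN : fromBlocks A B C D * fromBlocks g 0 0 1 =
        fromBlocks g 0 0 1 * fromBlocks A B C D := by
      rw [← hNb]; exact block_comm P h
    have hcN' : fromBlocks A' B' C' D' * fromBlocks g 0 0 1 =
        fromBlocks g 0 0 1 * fromBlocks A' B' C' D' := by
      rw [← hNb']; exact block_comm Q hcomm'
    obtain ⟨hAg, hBg, hCg⟩ : A * g = g * A ∧ B = g * B ∧ C * g = C := by
      simpa [fromBlocks_multiply] using hcN
    obtain ⟨hAg', hBg', hCg'⟩ : A' * g = g * A' ∧ B' = g * B' ∧ C' * g = C' := by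
      simpa [fromBlocks_multiply] using hcN'
    -- hAg : A * g = g * A, hBg : B = g * B, hCg : C * g = C  (check directions!)
    -- product equations
    have hNN' : fromBlocks A B C D * fromBlocks A' B' C' D' = 1 := by
      rw [← hNb, ← hNb', hN, hN', submatrix_mul_equiv, hPQ, submatrix_one_equiv]
    have hN'N : fromBlocks A' B' C' D' * fromBlocks A B C D = 1 := by
      rw [← hNb, ← hNb', hN, hN', submatrix_mul_equiv, hQP, submatrix_one_equiv]
    rw [fromBlocks_multiply, ← fromBlocks_one] at hNN' hN'N
    obtain ⟨e11, e12, e21, e22⟩ := fromBlocks_inj.mp hNN'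
    obtain ⟨f11, f12, f21, f22⟩ := fromBlocks_inj.mp hN'N
    -- zero products
    have hgB : (g - 1) * B = 0 := by
      rw [Matrix.sub_mul, Matrix.one_mul, ← hBg, sub_self]
    have hgB' : (g - 1) * B' = 0 := by
      rw [Matrix.sub_mul, Matrix.one_mul, ← hBg', sub_self]
    have hCgz : C * (g - 1) = 0 := by rw [Matrix.mul_sub, Matrix.mul_one, hCg, sub_self]
    have hCgz' : C' * (g - 1) = 0 := by rw [Matrix.mul_sub, Matrix.mul_one, hCg', sub_self]
    have hCB' : C * B' = 0 := aux_zero g hg B' hgB' C hCgz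
    have hC'B : C' * B = 0 := aux_zero g hg B hgB C' hCgz'
    -- D is invertible
    have hDD' : D * D' = 1 := by rw [← e22, hCB', zero_add]
    have hD'D : D' * D = 1 := by rw [← f22, hC'B, zero_add]
    -- A is surjective hence invertible
    have key1 : A * ((g - 1) * A') = g - 1 := by
      have h1 : (g - 1) * (A * A') + (g - 1) * (B * C') = g - 1 := by
        rw [← mul_add, e11, mul_one]
      rw [← Matrix.mul_assoc (g - 1) B C', hgB, Matrix.zero_mul, add_zero, ← Matrix.mul_assoc] at h1
      have h2 : (g - 1) * A = A * (g - 1) := by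
        rw [sub_mul, mul_sub, one_mul, mul_one, ← hAg]
      rw [h2, mul_assoc] at h1
      exact h1
    have hsurj : Function.Surjective (A.mulVec) := by
      intro v
      have h1 : (A * A') *ᵥ v + (B * C') *ᵥ v = v := by
        rw [← add_mulVec, e11, one_mulVec]
      have hw : (B * C') *ᵥ v ∈ LinearMap.ker (Matrix.toLin' (g - 1)) := by
        rw [LinearMap.mem_ker, Matrix.toLin'_apply, mulVec_mulVec, ← Matrix.mul_assoc, hgB,
          Matrix.zero_mul, zero_mulVec]
      obtain ⟨x, hx⟩ := hg hw
      rw [Matrix.toLin'_apply] at hx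
      refine ⟨A' *ᵥ v + ((g - 1) * A') *ᵥ x, ?_⟩
      rw [mulVec_add, mulVec_mulVec, mulVec_mulVec, key1, hx, h1]
    have hAu : IsUnit A := mulVec_surjective_iff_isUnit.mp hsurj
    -- assemble
    have hMeq : P = blockMat A B C D := by
      rw [blockMat, ← hNb, hN, reindex_apply, submatrix_submatrix]
      simp
    refine ⟨hAu.unit, ⟨D, D', hDD', hD'D⟩, B, C, ?_, ?_, hBg.symm, hCg⟩
    · rw [IsUnit.unit_spec]; exact hMeq
    · rw [IsUnit.unit_spec]; exact hAg
  · rintro ⟨A, D, B, C, hM, hA, hB, hC⟩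
    rw [hM, blockMat_mul, blockMat_mul]
    simp [hA, hB, hC]
end

section
/- Let k ≤ n and let ḡ ∈ GL_k(𝔽_q) satisfy ker(ḡ − 1) ⊆ im(ḡ − 1) (equivalently, every Jordan block of ḡ with eigenvalue 1 has size at least 2). Let g = ḡ ⊕ I_{n−k} ∈ GL_n(𝔽_q). If an n×n matrix M = [[A, B], [C, D]] over 𝔽_q (blocks of sizes k×k, k×(n−k), (n−k)×k, (n−k)×(n−k)) commutes with g, then M is invertible if and only if both A and D are invertible. -/
set_option linter.unusedSectionVars false

open Matrix

variable {F : Type*} [Field F] [Fintype F] [DecidableEq F]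

omit [Fintype F] [DecidableEq F] in
/-- key lemma: if `P * B = 0`, `C * P = 0` and `ker P ≤ im P` then `C * B = 0`. -/
lemma key_CB {k m : ℕ} (P : Matrix (Fin k) (Fin k) F)
    (hg : LinearMap.ker (Matrix.toLin' P) ≤ LinearMap.range (Matrix.toLin' P))
    (B : Matrix (Fin k) (Fin m) F) (C : Matrix (Fin m) (Fin k) F)
    (hB : P * B = 0) (hC : C * P = 0) : C * B = 0 := by
  ext i j
  have hv : Matrix.toLin' P (fun l => B l j) = 0 := by
    funext i'
    have := congrFun (congrFun hB i') j
    simpa [Matrix.toLin'_apply, Matrix.mulVec, dotProduct, Matrix.mul_apply] using this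
  obtain ⟨x, hx⟩ := hg (LinearMap.mem_ker.mpr hv)
  have hx' : P.mulVec x = fun l => B l j := by
    simpa [Matrix.toLin'_apply] using hx
  have h1 : (C * B) i j = (C.mulVec (P.mulVec x)) i := by
    rw [hx']
    simp [Matrix.mul_apply, Matrix.mulVec, dotProduct]
  rw [h1, Matrix.mulVec_mulVec, hC]
  simp

/-- The main result at the level of `fromBlocks` matrices. -/
lemma fromBlocks_isUnit_iff {k m : ℕ} (g0 : GL (Fin k) F)
    (hg : LinearMap.ker (Matrix.toLin' ((g0 : Matrix (Fin k) (Fin k) F) - 1)) ≤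
      LinearMap.range (Matrix.toLin' ((g0 : Matrix (Fin k) (Fin k) F) - 1)))
    (A : Matrix (Fin k) (Fin k) F) (B : Matrix (Fin k) (Fin m) F)
    (C : Matrix (Fin m) (Fin k) F) (D : Matrix (Fin m) (Fin m) F)
    (hMG : Matrix.fromBlocks A B C D *
        Matrix.fromBlocks (g0 : Matrix (Fin k) (Fin k) F) 0 0 1 =
      Matrix.fromBlocks (g0 : Matrix (Fin k) (Fin k) F) 0 0 1 * Matrix.fromBlocks A B C D) :
    IsUnit (Matrix.fromBlocks A B C D) ↔ IsUnit A ∧ IsUnit D := by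
  set G0 : Matrix (Fin k) (Fin k) F := (g0 : Matrix (Fin k) (Fin k) F) with hG0
  set P : Matrix (Fin k) (Fin k) F := G0 - 1 with hP
  have hMG' : Matrix.fromBlocks (A * G0) B (C * G0) D =
      Matrix.fromBlocks (G0 * A) (G0 * B) C D := by
    simpa [Matrix.fromBlocks_multiply] using hMG
  have eA : A * G0 = G0 * A := by
    have := congrArg Matrix.toBlocks₁₁ hMG'
    simpa using this
  have eB : B = G0 * B := by
    have := congrArg Matrix.toBlocks₁₂ hMG'
    simpa using this
  have eC : C * G0 = C := by
    have := congrArg Matrix.toBlocks₂₁ hMG'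
    simpa using this
  have hPB : P * B = 0 := by rw [hP, Matrix.sub_mul, Matrix.one_mul, ← eB, sub_self]
  have hCP : C * P = 0 := by rw [hP, Matrix.mul_sub, Matrix.mul_one, eC, sub_self]
  constructor
  · rintro ⟨u, hu⟩
    set M : Matrix (Fin k ⊕ Fin m) (Fin k ⊕ Fin m) F := Matrix.fromBlocks A B C D with hM
    set N : Matrix (Fin k ⊕ Fin m) (Fin k ⊕ Fin m) F :=
      ((u⁻¹ : (Matrix (Fin k ⊕ Fin m) (Fin k ⊕ Fin m) F)ˣ) :
        Matrix (Fin k ⊕ Fin m) (Fin k ⊕ Fin m) F) with hNdef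
    have hMN : M * N = 1 := by rw [← hu]; exact u.mul_inv
    have hNM : N * M = 1 := by rw [← hu]; exact u.inv_mul
    set G : Matrix (Fin k ⊕ Fin m) (Fin k ⊕ Fin m) F := Matrix.fromBlocks G0 0 0 1 with hG
    have hNG : N * G = G * N := by
      calc N * G = N * G * (M * N) := by rw [hMN, mul_one]
        _ = N * (G * M) * N := by noncomm_ring
        _ = N * (M * G) * N := by rw [← hMG]
        _ = (N * M) * (G * N) := by noncomm_ring
        _ = G * N := by rw [hNM, one_mul]
    set A' := N.toBlocks₁₁ with hA'
    set B' := N.toBlocks₁₂ with hB'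
    set C' := N.toBlocks₂₁ with hC'
    set D' := N.toBlocks₂₂ with hD'
    have hN : N = Matrix.fromBlocks A' B' C' D' := (Matrix.fromBlocks_toBlocks N).symm
    have hNG' : Matrix.fromBlocks (A' * G0) B' (C' * G0) D' =
        Matrix.fromBlocks (G0 * A') (G0 * B') C' D' := by
      have h2 := hNG
      rw [hN, hG] at h2
      simpa [Matrix.fromBlocks_multiply] using h2
    have eB2 : B' = G0 * B' := by
      have := congrArg Matrix.toBlocks₁₂ hNG'
      simpa using this
    have eC2 : C' * G0 = C' := by
      have := congrArg Matrix.toBlocks₂₁ hNG'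
      simpa using this
    have hPB' : P * B' = 0 := by rw [hP, Matrix.sub_mul, Matrix.one_mul, ← eB2, sub_self]
    have hC'P : C' * P = 0 := by rw [hP, Matrix.mul_sub, Matrix.mul_one, eC2, sub_self]
    have hCB' : C * B' = 0 := key_CB P hg B' C hPB' hCP
    have hC'B : C' * B = 0 := key_CB P hg B C' hPB hC'P
    -- product equations
    have hMN' : Matrix.fromBlocks (A * A' + B * C') (A * B' + B * D')
        (C * A' + D * C') (C * B' + D * D') = Matrix.fromBlocks 1 0 0 1 := by
      rw [Matrix.fromBlocks_one, ← Matrix.fromBlocks_multiply, ← hN]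
      exact hMN
    have hNM' : Matrix.fromBlocks (A' * A + B' * C) (A' * B + B' * D)
        (C' * A + D' * C) (C' * B + D' * D) = Matrix.fromBlocks 1 0 0 1 := by
      rw [Matrix.fromBlocks_one, ← Matrix.fromBlocks_multiply, ← hN]
      exact hNM
    have e11 : A * A' + B * C' = 1 := by
      have := congrArg Matrix.toBlocks₁₁ hMN'
      simpa only [Matrix.toBlocks_fromBlocks₁₁] using this
    have e22 : C * B' + D * D' = 1 := by
      have := congrArg Matrix.toBlocks₂₂ hMN'
      simpa only [Matrix.toBlocks_fromBlocks₂₂] using this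
    have f11 : A' * A + B' * C = 1 := by
      have := congrArg Matrix.toBlocks₁₁ hNM'
      simpa only [Matrix.toBlocks_fromBlocks₁₁] using this
    -- D is a unit
    have hDD' : D * D' = 1 := by rwa [hCB', zero_add] at e22
    have hDunit : IsUnit D := IsUnit.of_mul_eq_one _ hDD'
    -- A is a unit
    have hnil : (B * C') * (B * C') = 0 := by
      rw [Matrix.mul_assoc, ← Matrix.mul_assoc C' B C', hC'B, Matrix.zero_mul, Matrix.mul_zero]
    have hAA' : A * A' = 1 - B * C' := by
      rw [← e11]; abel
    have hunit1 : (1 - B * C') * (1 + B * C') = 1 := by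
      have h3 : (1 - B * C') * (1 + B * C') = 1 - (B * C') * (B * C') := by noncomm_ring
      rw [h3, hnil, sub_zero]
    have hA1 : A * (A' * (1 + B * C')) = 1 := by
      rw [← mul_assoc, hAA', hunit1]
    exact ⟨IsUnit.of_mul_eq_one _ hA1, hDunit⟩
  · rintro ⟨hA, hD⟩
    obtain ⟨iA⟩ := hA.nonempty_invertible
    have hAP : A * P = P * A := by
      rw [hP, mul_sub, sub_mul, mul_one, one_mul, eA]
    have hPinvA : P * ⅟A = ⅟A * P := by
      have hc : Commute P A := hAP.symm
      exact (hc.invOf_right).eq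
    have hPAB : P * (⅟A * B) = 0 := by
      rw [← Matrix.mul_assoc, hPinvA, Matrix.mul_assoc, hPB, Matrix.mul_zero]
    have hCAB : C * (⅟A * B) = 0 := key_CB P hg (⅟A * B) C hPAB hCP
    rw [Matrix.isUnit_iff_isUnit_det, Matrix.det_fromBlocks₁₁]
    have : C * ⅟A * B = 0 := by rw [Matrix.mul_assoc]; exact hCAB
    rw [this, sub_zero]
    exact ((Matrix.isUnit_iff_isUnit_det A).mp hA).mul ((Matrix.isUnit_iff_isUnit_det D).mp hD)

/-- Let `ḡ ∈ GL_k(𝔽_q)` with `ker(ḡ - 1) ⊆ im(ḡ - 1)`, and `g = ḡ ⊕ I_{n-k}`.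
If a block matrix `M = [[A, B], [C, D]]` commutes with `g`, then `M` is
invertible if and only if both `A` and `D` are invertible. -/
theorem block_invertible_iff {k m : ℕ} (g0 : GL (Fin k) F)
    (hg : LinearMap.ker (Matrix.toLin' ((g0 : Matrix (Fin k) (Fin k) F) - 1)) ≤
      LinearMap.range (Matrix.toLin' ((g0 : Matrix (Fin k) (Fin k) F) - 1)))
    (A : Matrix (Fin k) (Fin k) F) (B : Matrix (Fin k) (Fin m) F)
    (C : Matrix (Fin m) (Fin k) F) (D : Matrix (Fin m) (Fin m) F)
    (hcomm : blockMat A B C D * blockMat (g0 : Matrix (Fin k) (Fin k) F) 0 0 1 =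
      blockMat (g0 : Matrix (Fin k) (Fin k) F) 0 0 1 * blockMat A B C D) :
    IsUnit (blockMat A B C D) ↔ IsUnit A ∧ IsUnit D := by
  have hmul : ∀ (X Y : Matrix (Fin k ⊕ Fin m) (Fin k ⊕ Fin m) F),
      Matrix.reindex finSumFinEquiv finSumFinEquiv X *
        Matrix.reindex finSumFinEquiv finSumFinEquiv Y =
      Matrix.reindex finSumFinEquiv finSumFinEquiv (X * Y) := by
    intro X Y
    simp [Matrix.reindex_apply, Matrix.submatrix_mul_equiv]
  have hcomm' : Matrix.fromBlocks A B C D *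
      Matrix.fromBlocks (g0 : Matrix (Fin k) (Fin k) F) 0 0 1 =
      Matrix.fromBlocks (g0 : Matrix (Fin k) (Fin k) F) 0 0 1 * Matrix.fromBlocks A B C D := by
    apply (Matrix.reindex finSumFinEquiv finSumFinEquiv).injective
    rw [← hmul, ← hmul]
    exact hcomm
  have hblk : IsUnit (blockMat A B C D) ↔ IsUnit (Matrix.fromBlocks A B C D) := by
    rw [Matrix.isUnit_iff_isUnit_det, blockMat, Matrix.det_reindex_self,
      ← Matrix.isUnit_iff_isUnit_det]
  rw [hblk]
  exact fromBlocks_isUnit_iff g0 hg A B C D hcomm'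
end

section
/- Let k ≤ n and let ḡ ∈ GL_k(𝔽_q) satisfy ker(ḡ − 1) ⊆ im(ḡ − 1) (equivalently, every Jordan block of ḡ with eigenvalue 1 has size at least 2). Let g = ḡ ⊕ I_{n−k} ∈ GL_n(𝔽_q). Then the cardinality of the centralizer of g in GL_n(𝔽_q) equals the product of the following four numbers: the number of A ∈ GL_k(𝔽_q) with Aḡ = ḡA; the order of GL_{n−k}(𝔽_q); the number of k×(n−k) matrices B over 𝔽_q with ḡB = B; and the number of (n−k)×k matrices C over 𝔽_q with Cḡ = C. -/
open Matrix

variable {F : Type*} [Field F] [Fintype F] [DecidableEq F]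

/-- Units subtype equiv. -/
noncomputable def glEquiv {n : Type*} [Fintype n] [DecidableEq n] (P : Matrix n n F → Prop) :
    {M : GL n F | P (M : Matrix n n F)} ≃ {M : Matrix n n F // IsUnit M ∧ P M} where
  toFun M := ⟨(M.1 : Matrix n n F), M.1.isUnit, M.2⟩
  invFun N := ⟨N.2.1.unit, show P _ by rw [IsUnit.unit_spec]; exact N.2.2⟩
  left_inv M := by ext : 2; exact IsUnit.unit_spec _
  right_inv N := Subtype.ext N.2.1.unit_spec

noncomputable def glEquiv' {n : Type*} [Fintype n] [DecidableEq n] :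
    GL n F ≃ {M : Matrix n n F // IsUnit M} where
  toFun M := ⟨(M : Matrix n n F), M.isUnit⟩
  invFun N := N.2.unit
  left_inv M := by ext : 1; exact IsUnit.unit_spec _
  right_inv N := Subtype.ext N.2.unit_spec

/-- blocks equiv -/
def blocksEquiv (k m : ℕ) :
    Matrix (Fin k ⊕ Fin m) (Fin k ⊕ Fin m) F ≃
      Matrix (Fin k) (Fin k) F × Matrix (Fin m) (Fin m) F ×
        Matrix (Fin k) (Fin m) F × Matrix (Fin m) (Fin k) F where
  toFun N := (N.toBlocks₁₁, N.toBlocks₂₂, N.toBlocks₁₂, N.toBlocks₂₁)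
  invFun p := fromBlocks p.1 p.2.2.1 p.2.2.2 p.2.1
  left_inv N := fromBlocks_toBlocks N
  right_inv p := by rfl

section key
variable {k m : ℕ} {g0 : Matrix (Fin k) (Fin k) F}

lemma mem_W_iff {v : Fin k → F} : v ∈ LinearMap.ker (Matrix.toLin' (g0 - 1)) ↔ g0 *ᵥ v = v := by
  rw [LinearMap.mem_ker, Matrix.toLin'_apply, sub_mulVec, one_mulVec, sub_eq_zero]

lemma CAinvB_zero
    (hg : LinearMap.ker (Matrix.toLin' (g0 - 1)) ≤ LinearMap.range (Matrix.toLin' (g0 - 1)))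
    {A : Matrix (Fin k) (Fin k) F} (hA : IsUnit A) (hAg : A * g0 = g0 * A)
    {B : Matrix (Fin k) (Fin m) F} (hB : g0 * B = B)
    {C : Matrix (Fin m) (Fin k) F} (hC : C * g0 = C) :
    C * A⁻¹ * B = 0 := by
  have hdet : IsUnit A.det := (Matrix.isUnit_iff_isUnit_det A).mp hA
  have hAinv : (g0 - 1) * A⁻¹ = A⁻¹ * (g0 - 1) := by
    have h1 : g0 * A⁻¹ = A⁻¹ * g0 := by
      calc g0 * A⁻¹ = A⁻¹ * (A * g0) * A⁻¹ := by
            rw [← Matrix.mul_assoc, Matrix.nonsing_inv_mul A hdet, Matrix.one_mul]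
        _ = A⁻¹ * g0 * (A * A⁻¹) := by rw [hAg]; simp only [Matrix.mul_assoc]
        _ = A⁻¹ * g0 := by rw [Matrix.mul_nonsing_inv A hdet, Matrix.mul_one]
    rw [Matrix.mul_sub, Matrix.sub_mul, h1, Matrix.mul_one, Matrix.one_mul]
  have hB' : (g0 - 1) * B = 0 := by rw [Matrix.sub_mul, hB, Matrix.one_mul, sub_self]
  have hC' : C * (g0 - 1) = 0 := by rw [Matrix.mul_sub, hC, Matrix.mul_one, sub_self]
  apply Matrix.toLin'.injective
  rw [map_zero]
  refine LinearMap.ext fun x => ?_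
  have h1 : Matrix.toLin' (g0 - 1) (Matrix.toLin' B x) = 0 := by
    rw [← LinearMap.comp_apply, ← Matrix.toLin'_mul, hB', map_zero, LinearMap.zero_apply]
  have h2 : Matrix.toLin' A⁻¹ (Matrix.toLin' B x) ∈ LinearMap.ker (Matrix.toLin' (g0 - 1)) := by
    rw [LinearMap.mem_ker, ← LinearMap.comp_apply, ← Matrix.toLin'_mul, hAinv,
      Matrix.toLin'_mul, LinearMap.comp_apply, h1, map_zero]
  obtain ⟨z, hz⟩ := hg h2
  simp only [Matrix.toLin'_mul, LinearMap.comp_apply, LinearMap.zero_apply]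
  rw [← hz, ← LinearMap.comp_apply, ← Matrix.toLin'_mul, hC', map_zero, LinearMap.zero_apply]

lemma det_blocks
    (hg : LinearMap.ker (Matrix.toLin' (g0 - 1)) ≤ LinearMap.range (Matrix.toLin' (g0 - 1)))
    {A : Matrix (Fin k) (Fin k) F} (hA : IsUnit A) (hAg : A * g0 = g0 * A)
    {B : Matrix (Fin k) (Fin m) F} (hB : g0 * B = B)
    {C : Matrix (Fin m) (Fin k) F} (hC : C * g0 = C) (D : Matrix (Fin m) (Fin m) F) :
    (fromBlocks A B C D).det = A.det * D.det := by
  letI := hA.invertible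
  rw [Matrix.det_fromBlocks₁₁, Matrix.invOf_eq_nonsing_inv, CAinvB_zero hg hA hAg hB hC,
    sub_zero]

lemma isUnit_A_of_isUnit_blocks
    (hg : LinearMap.ker (Matrix.toLin' (g0 - 1)) ≤ LinearMap.range (Matrix.toLin' (g0 - 1)))
    {A : Matrix (Fin k) (Fin k) F} (hAg : A * g0 = g0 * A)
    {B : Matrix (Fin k) (Fin m) F} (hB : g0 * B = B)
    {C : Matrix (Fin m) (Fin k) F} (hC : C * g0 = C) {D : Matrix (Fin m) (Fin m) F}
    (hM : IsUnit (fromBlocks A B C D)) : IsUnit A := by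
  have hB' : (g0 - 1) * B = 0 := by rw [Matrix.sub_mul, hB, Matrix.one_mul, sub_self]
  have hC' : C * (g0 - 1) = 0 := by rw [Matrix.mul_sub, hC, Matrix.mul_one, sub_self]
  have hAg' : (g0 - 1) * A = A * (g0 - 1) := by
    rw [Matrix.mul_sub, Matrix.sub_mul, hAg, Matrix.mul_one, Matrix.one_mul]
  rw [Matrix.isUnit_iff_isUnit_det, isUnit_iff_ne_zero]
  intro hdet
  obtain ⟨v, hv, hAv⟩ := Matrix.exists_mulVec_eq_zero_iff.mpr hdet
  obtain ⟨u, hu⟩ := hM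
  by_cases hvW : g0 *ᵥ v = v
  · -- v ∈ ker(g0-1) ⊆ im(g0-1), so C *ᵥ v = 0 and fromBlocks kills (v,0)
    obtain ⟨z, hz⟩ := hg (mem_W_iff.mpr hvW)
    have hCv : C *ᵥ v = 0 := by
      rw [← hz, Matrix.toLin'_apply, Matrix.mulVec_mulVec, hC', Matrix.zero_mulVec]
    have hMv : fromBlocks A B C D *ᵥ Sum.elim v 0 = 0 := by
      rw [Matrix.fromBlocks_mulVec]
      simp [hAv, hCv]
    have : Sum.elim v (0 : Fin m → F) = 0 := by
      have h2 : (↑u⁻¹ : Matrix (Fin k ⊕ Fin m) (Fin k ⊕ Fin m) F) *ᵥ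
          (fromBlocks A B C D *ᵥ Sum.elim v 0) = Sum.elim v 0 := by
        rw [Matrix.mulVec_mulVec, ← hu, Units.inv_mul, Matrix.one_mulVec]
      rw [hMv, Matrix.mulVec_zero] at h2
      exact h2.symm
    exact hv (funext fun i => congrFun this (Sum.inl i))
  · -- quotient argument
    set W := LinearMap.ker (Matrix.toLin' (g0 - 1)) with hW
    have hWA : W ≤ W.comap (Matrix.toLin' A) := by
      intro x hx
      simp only [Submodule.mem_comap, hW, LinearMap.mem_ker] at hx ⊢
      rw [← LinearMap.comp_apply, ← Matrix.toLin'_mul, hAg', Matrix.toLin'_mul,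
        LinearMap.comp_apply, hx, map_zero]
    set ψ := Submodule.mapQ W W (Matrix.toLin' A) hWA with hψ
    have hnotinj : ¬ Function.Injective ψ := by
      intro hinj
      have h0 : ψ (Submodule.Quotient.mk v) = 0 := by
        rw [hψ, Submodule.mapQ_apply, Matrix.toLin'_apply, hAv, Submodule.Quotient.mk_eq_zero]
        exact Submodule.zero_mem W
      have := hinj (h0.trans (map_zero ψ).symm)
      rw [Submodule.Quotient.mk_eq_zero, mem_W_iff] at this
      exact hvW this
    have hnotsurj : ¬ Function.Surjective ψ := fun hs =>
      hnotinj (LinearMap.injective_iff_surjective.mpr hs)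
    rw [Function.Surjective] at hnotsurj
    push_neg at hnotsurj
    obtain ⟨ubar, hubar⟩ := hnotsurj
    obtain ⟨uu, huu⟩ := Submodule.Quotient.mk_surjective W ubar
    -- M surjective: find y with M *ᵥ y = (uu, 0)
    have hMy : fromBlocks A B C D *ᵥ ((↑u⁻¹ : Matrix (Fin k ⊕ Fin m) (Fin k ⊕ Fin m) F) *ᵥ Sum.elim uu 0)
        = Sum.elim uu 0 := by
      rw [Matrix.mulVec_mulVec, ← hu, Units.mul_inv, Matrix.one_mulVec]
    set y := (↑u⁻¹ : Matrix (Fin k ⊕ Fin m) (Fin k ⊕ Fin m) F) *ᵥ Sum.elim uu 0 with hy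
    have hysplit : y = Sum.elim (fun i => y (Sum.inl i)) (fun i => y (Sum.inr i)) := by
      funext i; cases i <;> rfl
    rw [hysplit, Matrix.fromBlocks_mulVec] at hMy
    have h1 : A *ᵥ (fun i => y (Sum.inl i)) + B *ᵥ (fun i => y (Sum.inr i)) = uu :=
      funext fun i => congrFun hMy (Sum.inl i)
    have hBW : B *ᵥ (fun i => y (Sum.inr i)) ∈ W := by
      rw [hW, LinearMap.mem_ker, Matrix.toLin'_apply, Matrix.mulVec_mulVec, hB',
        Matrix.zero_mulVec]
    refine hubar (Submodule.Quotient.mk (fun i => y (Sum.inl i))) ?_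
    rw [hψ, Submodule.mapQ_apply, ← huu, ← h1]
    rw [Submodule.Quotient.mk_add (p := W)]
    rw [(Submodule.Quotient.mk_eq_zero W).mpr hBW, add_zero, Matrix.toLin'_apply]

lemma isUnit_blocks_iff
    (hg : LinearMap.ker (Matrix.toLin' (g0 - 1)) ≤ LinearMap.range (Matrix.toLin' (g0 - 1)))
    {A : Matrix (Fin k) (Fin k) F} (hAg : A * g0 = g0 * A)
    {B : Matrix (Fin k) (Fin m) F} (hB : g0 * B = B)
    {C : Matrix (Fin m) (Fin k) F} (hC : C * g0 = C) {D : Matrix (Fin m) (Fin m) F} :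
    IsUnit (fromBlocks A B C D) ↔ IsUnit A ∧ IsUnit D := by
  constructor
  · intro hM
    have hA := isUnit_A_of_isUnit_blocks hg hAg hB hC hM
    refine ⟨hA, ?_⟩
    rw [Matrix.isUnit_iff_isUnit_det] at hM ⊢
    rw [det_blocks hg hA hAg hB hC D, IsUnit.mul_iff] at hM
    exact hM.2
  · rintro ⟨hA, hD⟩
    rw [Matrix.isUnit_iff_isUnit_det, det_blocks hg hA hAg hB hC D, IsUnit.mul_iff]
    exact ⟨(Matrix.isUnit_iff_isUnit_det A).mp hA, (Matrix.isUnit_iff_isUnit_det D).mp hD⟩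

lemma comm_blocks_iff {A : Matrix (Fin k) (Fin k) F} {B : Matrix (Fin k) (Fin m) F}
    {C : Matrix (Fin m) (Fin k) F} {D : Matrix (Fin m) (Fin m) F} :
    fromBlocks A B C D * fromBlocks g0 0 0 1 = fromBlocks g0 0 0 1 * fromBlocks A B C D ↔
      (A * g0 = g0 * A ∧ g0 * B = B ∧ C * g0 = C) := by
  rw [Matrix.fromBlocks_multiply, Matrix.fromBlocks_multiply]
  simp only [Matrix.mul_zero, Matrix.zero_mul, Matrix.mul_one, Matrix.one_mul, add_zero,
    zero_add, Matrix.fromBlocks_inj]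
  constructor
  · rintro ⟨h1, h2, h3, -⟩
    exact ⟨h1, h2.symm, h3⟩
  · rintro ⟨h1, h2, h3⟩
    exact ⟨h1, h2.symm, h3, trivial⟩

end key

/-- Let `ḡ ∈ GL_k(𝔽_q)` with `ker(ḡ - 1) ⊆ im(ḡ - 1)`, and `g = ḡ ⊕ I_{n-k}`.
The cardinality of the centralizer of `g` in `GL_n(𝔽_q)` is the product of the
number of `A ∈ GL_k` commuting with `ḡ`, the order of `GL_{n-k}`, the number of
`k × (n-k)` matrices `B` with `ḡB = B`, and the number of `(n-k) × k` matrices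
`C` with `Cḡ = C`. -/
theorem centralizer_card {k m : ℕ} (g0 : GL (Fin k) F)
    (hg : LinearMap.ker (Matrix.toLin' ((g0 : Matrix (Fin k) (Fin k) F) - 1)) ≤
      LinearMap.range (Matrix.toLin' ((g0 : Matrix (Fin k) (Fin k) F) - 1))) :
    Nat.card {M : GL (Fin (k + m)) F |
        (M : Matrix (Fin (k + m)) (Fin (k + m)) F) *
            blockMat (g0 : Matrix (Fin k) (Fin k) F) 0 0 1 =
          blockMat (g0 : Matrix (Fin k) (Fin k) F) 0 0 1 *
            (M : Matrix (Fin (k + m)) (Fin (k + m)) F)} =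
      Nat.card {A : GL (Fin k) F |
          (A : Matrix (Fin k) (Fin k) F) * (g0 : Matrix (Fin k) (Fin k) F) =
            (g0 : Matrix (Fin k) (Fin k) F) * (A : Matrix (Fin k) (Fin k) F)} *
        Nat.card (GL (Fin m) F) *
        Nat.card {B : Matrix (Fin k) (Fin m) F |
          (g0 : Matrix (Fin k) (Fin k) F) * B = B} *
        Nat.card {C : Matrix (Fin m) (Fin k) F |
          C * (g0 : Matrix (Fin k) (Fin k) F) = C} := by
  set g : Matrix (Fin k) (Fin k) F := (g0 : Matrix (Fin k) (Fin k) F) with hgdef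
  set G : Matrix (Fin (k + m)) (Fin (k + m)) F := blockMat g 0 0 1 with hG
  set G' : Matrix (Fin k ⊕ Fin m) (Fin k ⊕ Fin m) F := fromBlocks g 0 0 1 with hG'
  let φ := Matrix.reindexAlgEquiv F F (finSumFinEquiv (m := k) (n := m)).symm
  have hφG : φ G = G' := by
    simp [hG, hG', φ, blockMat, Matrix.reindexAlgEquiv_apply, Matrix.reindex_apply,
      Matrix.submatrix_submatrix]
  -- step 1
  let E1 := glEquiv (F := F) (n := Fin (k + m)) (fun N => N * G = G * N)
  -- step 2
  have h2 : ∀ N : Matrix (Fin (k + m)) (Fin (k + m)) F,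
      (IsUnit N ∧ N * G = G * N) ↔ (IsUnit (φ N) ∧ φ N * G' = G' * φ N) := by
    intro N
    constructor
    · rintro ⟨h1, hcomm⟩
      refine ⟨h1.map φ, ?_⟩
      rw [← hφG, ← _root_.map_mul, ← _root_.map_mul, hcomm]
    · rintro ⟨h1, hcomm⟩
      constructor
      · have := h1.map φ.symm
        rwa [AlgEquiv.symm_apply_apply] at this
      · apply φ.injective
        rw [_root_.map_mul, _root_.map_mul, hφG]
        exact hcomm
  let E2 : {N : Matrix (Fin (k + m)) (Fin (k + m)) F // IsUnit N ∧ N * G = G * N} ≃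
      {N : Matrix (Fin k ⊕ Fin m) (Fin k ⊕ Fin m) F // IsUnit N ∧ N * G' = G' * N} :=
    Equiv.subtypeEquiv φ.toEquiv h2
  -- step 3
  have h3 : ∀ N : Matrix (Fin k ⊕ Fin m) (Fin k ⊕ Fin m) F,
      (IsUnit N ∧ N * G' = G' * N) ↔
        ((IsUnit (blocksEquiv k m N).1 ∧ (blocksEquiv k m N).1 * g = g * (blocksEquiv k m N).1) ∧
          (IsUnit (blocksEquiv k m N).2.1 ∧
            ((g * (blocksEquiv k m N).2.2.1 = (blocksEquiv k m N).2.2.1) ∧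
              ((blocksEquiv k m N).2.2.2 * g = (blocksEquiv k m N).2.2.2)))) := by
    intro N
    have hN : N = fromBlocks N.toBlocks₁₁ N.toBlocks₁₂ N.toBlocks₂₁ N.toBlocks₂₂ :=
      (fromBlocks_toBlocks N).symm
    constructor
    · rintro ⟨hu, hc⟩
      rw [hN, hG', comm_blocks_iff] at hc
      obtain ⟨hAg, hB, hC⟩ := hc
      rw [hN] at hu
      have h := (isUnit_blocks_iff hg hAg hB hC).mp hu
      exact ⟨⟨h.1, hAg⟩, h.2, hB, hC⟩
    · rintro ⟨⟨hA, hAg⟩, hD, hB, hC⟩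
      constructor
      · rw [hN]
        exact (isUnit_blocks_iff hg hAg hB hC).mpr ⟨hA, hD⟩
      · rw [hN, hG', comm_blocks_iff]
        exact ⟨hAg, hB, hC⟩
  let E3 : {N : Matrix (Fin k ⊕ Fin m) (Fin k ⊕ Fin m) F // IsUnit N ∧ N * G' = G' * N} ≃
      {p : Matrix (Fin k) (Fin k) F × Matrix (Fin m) (Fin m) F ×
          Matrix (Fin k) (Fin m) F × Matrix (Fin m) (Fin k) F //
        (IsUnit p.1 ∧ p.1 * g = g * p.1) ∧
          (IsUnit p.2.1 ∧ ((g * p.2.2.1 = p.2.2.1) ∧ (p.2.2.2 * g = p.2.2.2)))} :=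
    Equiv.subtypeEquiv (blocksEquiv (F := F) k m) h3
  -- step 4
  let E4 := (Equiv.subtypeProdEquivProd
      (p := fun A : Matrix (Fin k) (Fin k) F => IsUnit A ∧ A * g = g * A)
      (q := fun p : Matrix (Fin m) (Fin m) F ×
          Matrix (Fin k) (Fin m) F × Matrix (Fin m) (Fin k) F =>
        IsUnit p.1 ∧ ((g * p.2.1 = p.2.1) ∧ (p.2.2 * g = p.2.2)))).trans
    (Equiv.prodCongr (Equiv.refl _)
      ((Equiv.subtypeProdEquivProd
        (p := fun D : Matrix (Fin m) (Fin m) F => IsUnit D)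
        (q := fun p : Matrix (Fin k) (Fin m) F × Matrix (Fin m) (Fin k) F =>
          (g * p.1 = p.1) ∧ (p.2 * g = p.2))).trans
      (Equiv.prodCongr (Equiv.refl _)
        (Equiv.subtypeProdEquivProd
          (p := fun B : Matrix (Fin k) (Fin m) F => g * B = B)
          (q := fun C : Matrix (Fin m) (Fin k) F => C * g = C)))))
  have hmain := Nat.card_congr (((E1.trans E2).trans E3).trans E4)
  rw [Nat.card_prod, Nat.card_prod, Nat.card_prod] at hmain
  rw [hmain]
  rw [Nat.card_congr (glEquiv (F := F) (n := Fin k) (fun A => A * g = g * A)),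
    Nat.card_congr (glEquiv' (F := F) (n := Fin m)),
    show Nat.card {B : Matrix (Fin k) (Fin m) F | g * B = B} =
        Nat.card {B : Matrix (Fin k) (Fin m) F // g * B = B} from
      Nat.card_congr (Equiv.subtypeEquivRight fun _ => Iff.rfl),
    show Nat.card {C : Matrix (Fin m) (Fin k) F | C * g = C} =
        Nat.card {C : Matrix (Fin m) (Fin k) F // C * g = C} from
      Nat.card_congr (Equiv.subtypeEquivRight fun _ => Iff.rfl)]
  ring
end

section
/- Let g, h ∈ GL_n(𝔽_q) satisfy ℓ(gh) = ℓ(g) + ℓ(h). Set k = 2·rank(gh − 1) − rank((gh − 1)²). Then k ≤ n and there exist z ∈ GL_n(𝔽_q) and ḡ, h̄ ∈ GL_k(𝔽_q) such that z g z⁻¹ = ḡ ⊕ I_{n−k} and z h z⁻¹ = h̄ ⊕ I_{n−k} (and consequently z (gh) z⁻¹ = (ḡ h̄) ⊕ I_{n−k}). -/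
set_option linter.unusedSectionVars false
set_option maxHeartbeats 1000000
set_option synthInstance.maxHeartbeats 400000


open Matrix

variable {F : Type*} [Field F] [Fintype F] [DecidableEq F]

/-- The embedding of a `k × k` matrix `A` as `A ⊕ I_{n-k}` in `n × n` matrices. -/
def pad {k n : ℕ} (h : k ≤ n) (A : Matrix (Fin k) (Fin k) F) :
    Matrix (Fin n) (Fin n) F :=
  Matrix.reindex (finSumFinEquiv.trans (finCongr (Nat.add_sub_cancel' h)))
    (finSumFinEquiv.trans (finCongr (Nat.add_sub_cancel' h)))
    (Matrix.fromBlocks A 0 0 (1 : Matrix (Fin (n - k)) (Fin (n - k)) F))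

namespace NFT
variable {n : ℕ}


variable {n : ℕ}

lemma rank_def (A : Matrix (Fin n) (Fin n) F) :
    A.rank = Module.finrank F (LinearMap.range A.mulVecLin) := rfl

lemma finrank_sup_le (p q : Submodule F (Fin n → F)) :
    Module.finrank F (p ⊔ q : Submodule F (Fin n → F)) ≤
      Module.finrank F p + Module.finrank F q := by
  have h := Submodule.finrank_sup_add_finrank_inf_eq p q
  omega

lemma rank_add_le' (A B : Matrix (Fin n) (Fin n) F) :
    (A + B).rank ≤ A.rank + B.rank := by
  rw [rank_def, rank_def, rank_def]
  refine le_trans ?_ (finrank_sup_le _ _)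
  apply Submodule.finrank_mono
  rintro x ⟨v, rfl⟩
  exact Submodule.mem_sup.2 ⟨A.mulVecLin v, ⟨v, rfl⟩, B.mulVecLin v, ⟨v, rfl⟩, by
    simp [Matrix.mulVecLin_apply, Matrix.add_mulVec]⟩

lemma rank_sub_one_mul_le (x p : Matrix (Fin n) (Fin n) F) :
    (x * p - 1).rank ≤ (x - 1).rank + (p - 1).rank := by
  have h : x * p - 1 = (x - 1) * p + (p - 1) := by noncomm_ring
  rw [h]
  exact le_trans (rank_add_le' _ _) (by
    gcongr
    exact Matrix.rank_mul_le_left _ _)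

lemma rank_prod_sub_one_le (l : List (GL (Fin n) F)) (hl : ∀ s ∈ l, IsReflection s) :
    ((l.prod : Matrix (Fin n) (Fin n) F) - 1).rank ≤ l.length := by
  induction l with
  | nil => simp
  | cons s t ih =>
      have hs : IsReflection s := hl s (by simp)
      have ht := ih (fun r hr => hl r (by simp [hr]))
      have : ((List.prod (s :: t) : GL (Fin n) F) : Matrix (Fin n) (Fin n) F)
          = (s : Matrix (Fin n) (Fin n) F) * (t.prod : Matrix (Fin n) (Fin n) F) := by
        simp [List.prod_cons]
      rw [this]
      calc ((s : Matrix (Fin n) (Fin n) F) * (t.prod : Matrix (Fin n) (Fin n) F) - 1).rank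
          ≤ ((s : Matrix (Fin n) (Fin n) F) - 1).rank
            + ((t.prod : Matrix (Fin n) (Fin n) F) - 1).rank := rank_sub_one_mul_le _ _
        _ ≤ 1 + t.length := by rw [hs]; gcongr
        _ = (s :: t).length := by simp [Nat.add_comm]


variable {n : ℕ}

lemma exists_dual_pair {M : Type*} [AddCommGroup M] [Module F M] {a b : M}
    (ha : a ≠ 0) (hb : b ≠ 0) : ∃ ψ : Module.Dual F M, ψ a = 1 ∧ ψ b ≠ 0 := by
  obtain ⟨χ, hχ⟩ : ∃ χ : Module.Dual F M, χ a ≠ 0 := by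
    by_contra hc; push_neg at hc
    exact ha ((Module.forall_dual_apply_eq_zero_iff F a).1 hc)
  set ψ₁ : Module.Dual F M := (χ a)⁻¹ • χ with hψ₁def
  have hψ₁a : ψ₁ a = 1 := by
    simp [hψ₁def, inv_mul_cancel₀ hχ]
  by_cases hψb : ψ₁ b = 0
  · obtain ⟨ψ₀, hψ₀⟩ : ∃ ψ₀ : Module.Dual F M, ψ₀ b ≠ 0 := by
      by_contra hc; push_neg at hc
      exact hb ((Module.forall_dual_apply_eq_zero_iff F b).1 hc)
    refine ⟨ψ₁ + (ψ₀ b)⁻¹ • (ψ₀ - (ψ₀ a) • ψ₁), ?_, ?_⟩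
    · simp [hψ₁a]
    · simp [hψ₁a, hψb, inv_mul_cancel₀ hψ₀]
  · exact ⟨ψ₁, hψ₁a, hψb⟩

lemma exists_reflection_step (x : GL (Fin n) F)
    (hx : ((x : Matrix (Fin n) (Fin n) F) - 1).rank ≠ 0) :
    ∃ s : GL (Fin n) F,
      ((s : Matrix (Fin n) (Fin n) F) - 1).rank = 1 ∧
      (((s⁻¹ * x : GL (Fin n) F) : Matrix (Fin n) (Fin n) F) - 1).rank <
        ((x : Matrix (Fin n) (Fin n) F) - 1).rank := by
  classical
  set xm : Matrix (Fin n) (Fin n) F := (x : Matrix (Fin n) (Fin n) F) with hxm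
  set A : Matrix (Fin n) (Fin n) F := xm - 1 with hA
  set f := A.mulVecLin with hf
  set K := LinearMap.ker f with hK
  -- membership in K
  have hmemK : ∀ u, u ∈ K ↔ xm.mulVec u = u := by
    intro u
    rw [hK, LinearMap.mem_ker, hf, mulVecLin_apply, hA, sub_mulVec, one_mulVec,
      sub_eq_zero]
  -- K ≠ ⊤
  have hKne : K ≠ ⊤ := by
    intro htop
    apply hx
    have hf0 : A.mulVecLin = 0 := LinearMap.ker_eq_top.1 htop
    rw [show A.rank = Module.finrank F (LinearMap.range A.mulVecLin) from rfl, hf0]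
    simp
  -- find v ∉ K with x v ∉ K
  obtain ⟨v, hvK, hxvK⟩ : ∃ v, v ∉ K ∧ xm.mulVec v ∉ K := by
    by_contra hc
    push_neg at hc
    have hall : ∀ u, xm.mulVec u ∈ K := by
      intro u
      by_cases hu : u ∈ K
      · obtain ⟨v₀, hv₀⟩ : ∃ v₀, v₀ ∉ K := by
          by_contra hc2; push_neg at hc2
          exact hKne (Submodule.eq_top_iff'.2 hc2)
        have huv₀ : u + v₀ ∉ K := by
          intro hm
          exact hv₀ (by simpa using K.sub_mem hm hu)
        have h1 := hc _ huv₀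
        have h2 := hc _ hv₀
        have : xm.mulVec u = xm.mulVec (u + v₀) - xm.mulVec v₀ := by
          rw [mulVec_add]; abel
        rw [this]
        exact K.sub_mem h1 h2
      · exact hc u hu
    apply hKne
    rw [Submodule.eq_top_iff']
    intro w
    have hw : xm.mulVec (((x⁻¹ : GL (Fin n) F) : Matrix (Fin n) (Fin n) F).mulVec w) = w := by
      rw [mulVec_mulVec]
      have : xm * ((x⁻¹ : GL (Fin n) F) : Matrix (Fin n) (Fin n) F) = 1 := by
        rw [hxm]; exact x.mul_inv
      rw [this, one_mulVec]
    rw [← hw]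
    exact hall _
  have hv0 : v ≠ 0 := fun h => hvK (h ▸ K.zero_mem)
  set c : Fin n → F := A.mulVec v with hc
  have hcx : c = xm.mulVec v - v := by rw [hc, hA, sub_mulVec, one_mulVec]
  have hc0 : c ≠ 0 := by
    intro h
    exact hvK ((hmemK v).2 (by rw [← sub_eq_zero, ← hcx, h]))
  -- dual functional
  have hπv : K.mkQ v ≠ 0 := by
    rw [Submodule.mkQ_apply, ne_eq, Submodule.Quotient.mk_eq_zero]; exact hvK
  have hπxv : K.mkQ (xm.mulVec v) ≠ 0 := by
    rw [Submodule.mkQ_apply, ne_eq, Submodule.Quotient.mk_eq_zero]; exact hxvK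
  obtain ⟨ψ, hψ1, hψ2⟩ := exists_dual_pair (F := F) hπv hπxv
  set φ : Module.Dual F (Fin n → F) := ψ.comp K.mkQ with hφ
  have hφK : ∀ u ∈ K, φ u = 0 := by
    intro u hu
    rw [hφ]
    simp [(Submodule.Quotient.mk_eq_zero K).2 hu]
  have hφv : φ v = 1 := hψ1
  set t : F := φ (xm.mulVec v) with hts
  have ht : t ≠ 0 := hψ2
  have hφc : φ c = t - 1 := by rw [hcx]; simp [hts, hφv]
  -- the reflection matrix
  set φvec : Fin n → F := fun j => φ (fun i => if j = i then 1 else 0) with hφvec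
  have hφdot : ∀ y, φ y = φvec ⬝ᵥ y := by
    intro y
    rw [LinearMap.pi_apply_eq_sum_univ φ y, dotProduct]
    exact Finset.sum_congr rfl fun i _ => by rw [smul_eq_mul, mul_comm]
  set E : Matrix (Fin n) (Fin n) F := vecMulVec c φvec with hE
  have hEmul : ∀ y, E.mulVec y = φ y • c := by
    intro y
    ext i
    simp only [hE, mulVec, dotProduct, vecMulVec_apply, Pi.smul_apply, smul_eq_mul, hφdot y]
    rw [Finset.sum_mul]
    exact Finset.sum_congr rfl fun j _ => by ring
  have hEE : E * E = (t - 1) • E := by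
    ext i j
    simp only [hE, Matrix.mul_apply, vecMulVec_apply, Matrix.smul_apply, smul_eq_mul]
    have : ∑ k, c i * φvec k * (c k * φvec j) = (φvec ⬝ᵥ c) * (c i * φvec j) := by
      rw [dotProduct, Finset.sum_mul]
      exact Finset.sum_congr rfl fun k _ => by ring
    rw [this, ← hφdot, hφc]
  set smat : Matrix (Fin n) (Fin n) F := 1 + E with hsmat
  set sinv : Matrix (Fin n) (Fin n) F := 1 - t⁻¹ • E with hsinv
  have hkey : ∀ (B C : Matrix (Fin n) (Fin n) F), B = smat → C = sinv → B * C = 1 ∧ C * B = 1 := by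
    intro B C hB hC
    subst hB hC
    constructor
    · rw [hsmat, hsinv]
      have h1 : (1 + E) * (1 - t⁻¹ • E) = 1 - t⁻¹ • E + E - t⁻¹ • (E * E) := by
        rw [mul_sub, mul_one, add_mul, one_mul, Matrix.mul_smul]
        abel
      rw [h1, hEE, smul_smul]
      have h2 : t⁻¹ * (t - 1) = 1 - t⁻¹ := by field_simp
      rw [h2]
      module
    · rw [hsmat, hsinv]
      have h1 : (1 - t⁻¹ • E) * (1 + E) = 1 - t⁻¹ • E + E - t⁻¹ • (E * E) := by
        rw [mul_add, mul_one, sub_mul, one_mul, Matrix.smul_mul]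
        abel
      rw [h1, hEE, smul_smul]
      have h2 : t⁻¹ * (t - 1) = 1 - t⁻¹ := by field_simp
      rw [h2]
      module
  obtain ⟨hss1, hss2⟩ := hkey smat sinv rfl rfl
  set s : GL (Fin n) F := ⟨smat, sinv, hss1, hss2⟩ with hs
  have hsval : (s : Matrix (Fin n) (Fin n) F) = smat := rfl
  have hsinvval : ((s⁻¹ : GL (Fin n) F) : Matrix (Fin n) (Fin n) F) = sinv := rfl
  refine ⟨s, ?_, ?_⟩
  · -- reflection
    have hE1 : (s : Matrix (Fin n) (Fin n) F) - 1 = E := by rw [hsval, hsmat]; abel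
    rw [hE1]
    have hrange : LinearMap.range E.mulVecLin = Submodule.span F {c} := by
      apply le_antisymm
      · rintro _ ⟨y, rfl⟩
        rw [mulVecLin_apply, hEmul]
        exact Submodule.smul_mem _ _ (Submodule.mem_span_singleton_self c)
      · rw [Submodule.span_le, Set.singleton_subset_iff]
        exact ⟨v, by rw [mulVecLin_apply, hEmul, hφv, one_smul]⟩
    rw [Matrix.rank, hrange]
    exact finrank_span_singleton hc0
  · -- rank decrease
    set x'm : Matrix (Fin n) (Fin n) F := ((s⁻¹ * x : GL (Fin n) F) : Matrix (Fin n) (Fin n) F)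
      with hx'm
    have hx'mval : x'm = sinv * xm := by
      rw [hx'm, Units.val_mul, hsinvval, hxm]
    set f' := (x'm - 1).mulVecLin with hf'
    set K' := LinearMap.ker f' with hK'
    have hmemK' : ∀ u, u ∈ K' ↔ x'm.mulVec u = u := by
      intro u
      rw [hK', LinearMap.mem_ker, hf', mulVecLin_apply, sub_mulVec, one_mulVec, sub_eq_zero]
    have hsinvfix : ∀ u, φ u = 0 → sinv.mulVec u = u := by
      intro u hu
      rw [hsinv, sub_mulVec, one_mulVec, smul_mulVec, hEmul, hu]
      simp
    have hKle : K ≤ K' := by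
      intro u hu
      rw [hmemK']
      rw [hx'mval, ← mulVec_mulVec, (hmemK u).1 hu]
      exact hsinvfix u (hφK u hu)
    have hvK' : v ∈ K' := by
      rw [hmemK']
      have hsv : smat.mulVec v = xm.mulVec v := by
        rw [hsmat, add_mulVec, one_mulVec, hEmul, hφv, one_smul, hcx]
        abel
      rw [hx'mval, ← mulVec_mulVec, ← hsv, mulVec_mulVec, hss2, one_mulVec]
    -- dimension count
    have hsup : K ⊔ Submodule.span F {v} ≤ K' :=
      sup_le hKle ((Submodule.span_le).2 (Set.singleton_subset_iff.2 hvK'))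
    have hinf : K ⊓ Submodule.span F {v} = ⊥ := by
      rw [Submodule.eq_bot_iff]
      rintro y ⟨hyK, hyv⟩
      obtain ⟨a, rfl⟩ := Submodule.mem_span_singleton.1 hyv
      by_cases ha : a = 0
      · rw [ha, zero_smul]
      · exact absurd (by simpa [ha] using K.smul_mem a⁻¹ hyK) hvK
    have hdim_sup : Module.finrank F (K ⊔ Submodule.span F {v} : Submodule F (Fin n → F)) =
        Module.finrank F K + 1 := by
      have := Submodule.finrank_sup_add_finrank_inf_eq K (Submodule.span F {v})
      rw [hinf, finrank_span_singleton hv0] at this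
      simpa using this
    have hrnA : A.rank + Module.finrank F K = n := by
      have hh := LinearMap.finrank_range_add_finrank_ker f
      rw [Module.finrank_fin_fun] at hh
      exact hh
    have hrnA' : (x'm - 1).rank + Module.finrank F K' = n := by
      have hh := LinearMap.finrank_range_add_finrank_ker f'
      rw [Module.finrank_fin_fun] at hh
      exact hh
    have hK'ge : Module.finrank F K + 1 ≤ Module.finrank F K' := by
      rw [← hdim_sup]
      exact Submodule.finrank_mono hsup
    have : ((x : Matrix (Fin n) (Fin n) F) - 1).rank = A.rank := by rw [hA, hxm]
    omega


variable {n : ℕ}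


lemma eq_one_of_rank_eq_zero {x : GL (Fin n) F}
    (hx : ((x : Matrix (Fin n) (Fin n) F) - 1).rank = 0) : x = 1 := by
  classical
  have h0 : ((x : Matrix (Fin n) (Fin n) F) - 1) = 0 := by
    set A := (x : Matrix (Fin n) (Fin n) F) - 1 with hA
    have hr : Module.finrank F (LinearMap.range A.mulVecLin) = 0 := hx
    rw [Submodule.finrank_eq_zero, LinearMap.range_eq_bot] at hr
    ext i j
    have h2 : A.mulVec (Pi.single j 1) = 0 := by
      have := LinearMap.congr_fun hr (Pi.single j 1)
      simpa using this
    have h3 := congrFun h2 i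
    rw [mulVec_single] at h3
    simpa using h3
  ext1
  rw [sub_eq_zero] at h0
  simpa using h0

lemma exists_list (r : ℕ) : ∀ (x : GL (Fin n) F),
    ((x : Matrix (Fin n) (Fin n) F) - 1).rank ≤ r →
    ∃ l : List (GL (Fin n) F), (∀ s ∈ l, IsReflection s) ∧ l.prod = x ∧ l.length ≤ r := by
  induction r with
  | zero =>
      intro x hx
      have hx1 : x = 1 := eq_one_of_rank_eq_zero (Nat.le_zero.1 hx)
      exact ⟨[], by simp, by simp [hx1], by simp⟩
  | succ r ih =>
      intro x hx
      by_cases h0 : ((x : Matrix (Fin n) (Fin n) F) - 1).rank = 0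
      · have hx1 : x = 1 := eq_one_of_rank_eq_zero h0
        exact ⟨[], by simp, by simp [hx1], by simp⟩
      · obtain ⟨s, hs1, hs2⟩ := exists_reflection_step x h0
        obtain ⟨l, hl1, hl2, hl3⟩ := ih (s⁻¹ * x) (by omega)
        refine ⟨s :: l, ?_, ?_, by simpa using hl3⟩
        · intro r hr
          rcases List.mem_cons.1 hr with h | h
          · rw [h]; exact hs1
          · exact hl1 r h
        · rw [List.prod_cons, hl2, ← mul_assoc, mul_inv_cancel, one_mul]

lemma reflLength_eq_rank (x : GL (Fin n) F) :
    reflLength x = ((x : Matrix (Fin n) (Fin n) F) - 1).rank := by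
  obtain ⟨l₀, hl₀refl, hl₀prod, hl₀len⟩ := exists_list _ x le_rfl
  apply le_antisymm
  · exact le_trans (Nat.sInf_le ⟨l₀, rfl, hl₀refl, hl₀prod⟩) hl₀len
  · have hne : {k | ∃ l : List (GL (Fin n) F),
        l.length = k ∧ (∀ s ∈ l, IsReflection s) ∧ l.prod = x}.Nonempty :=
      ⟨l₀.length, l₀, rfl, hl₀refl, hl₀prod⟩
    obtain ⟨l, hlen, hrefl, hprod⟩ := Nat.sInf_mem hne
    rw [reflLength, ← hlen, ← hprod]
    exact rank_prod_sub_one_le l hrefl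


variable {n : ℕ}

-- main geometric lemma: from rank additivity, construct complement data
theorem exists_invariant_decomp (g h : GL (Fin n) F) {k : ℕ}
    (hadd : ((g : Matrix (Fin n) (Fin n) F) * (h : Matrix (Fin n) (Fin n) F) - 1).rank
      = ((g : Matrix (Fin n) (Fin n) F) - 1).rank + ((h : Matrix (Fin n) (Fin n) F) - 1).rank)
    (hk : k = 2 * ((g : Matrix (Fin n) (Fin n) F) * (h : Matrix (Fin n) (Fin n) F) - 1).rank -
      (((g : Matrix (Fin n) (Fin n) F) * (h : Matrix (Fin n) (Fin n) F) - 1) ^ 2).rank) :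
    ∃ (U' W' : Submodule F (Fin n → F)), IsCompl U' W' ∧
      Module.finrank F U' = k ∧ k ≤ n ∧
      (∀ x ∈ U', (g : Matrix (Fin n) (Fin n) F).mulVec x ∈ U') ∧
      (∀ x ∈ U', (h : Matrix (Fin n) (Fin n) F).mulVec x ∈ U') ∧
      (∀ x ∈ W', (g : Matrix (Fin n) (Fin n) F).mulVec x = x) ∧
      (∀ x ∈ W', (h : Matrix (Fin n) (Fin n) F).mulVec x = x) := by
  classical
  set gm : Matrix (Fin n) (Fin n) F := (g : Matrix (Fin n) (Fin n) F) with hgm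
  set hm : Matrix (Fin n) (Fin n) F := (h : Matrix (Fin n) (Fin n) F) with hhm
  set A : Matrix (Fin n) (Fin n) F := gm - 1 with hA
  set B : Matrix (Fin n) (Fin n) F := hm - 1 with hB
  set M : Matrix (Fin n) (Fin n) F := gm * hm - 1 with hM
  set RA := LinearMap.range A.mulVecLin with hRA
  set RB := LinearMap.range B.mulVecLin with hRB
  set KA := LinearMap.ker A.mulVecLin with hKA
  set KB := LinearMap.ker B.mulVecLin with hKB
  set U : Submodule F (Fin n → F) := RA ⊔ RB with hU
  set W : Submodule F (Fin n → F) := KA ⊓ KB with hW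
  -- expansion of M
  have hMexp : M = A + B + A * B := by rw [hM, hA, hB]; noncomm_ring
  have hMv : ∀ v, M.mulVec v = A.mulVec v + B.mulVec v + A.mulVec (B.mulVec v) := by
    intro v
    rw [hMexp, add_mulVec, add_mulVec, mulVec_mulVec]
  -- range M ≤ U, W ≤ ker M
  have hRM_le : LinearMap.range M.mulVecLin ≤ U := by
    rintro _ ⟨v, rfl⟩
    rw [mulVecLin_apply, hMv]
    refine Submodule.add_mem _ (Submodule.add_mem _ ?_ ?_) ?_
    · exact Submodule.mem_sup_left ⟨v, rfl⟩
    · exact Submodule.mem_sup_right ⟨v, rfl⟩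
    · exact Submodule.mem_sup_left ⟨B.mulVec v, rfl⟩
  have hW_le : W ≤ LinearMap.ker M.mulVecLin := by
    rintro v ⟨hvA, hvB⟩
    have hA0 : A.mulVec v = 0 := hvA
    have hB0 : B.mulVec v = 0 := hvB
    rw [LinearMap.mem_ker, mulVecLin_apply, hMv, hA0, hB0]
    simp [Matrix.mulVec_zero]
  -- finrank bookkeeping
  have hrankA : A.rank = Module.finrank F RA := rfl
  have hrankB : B.rank = Module.finrank F RB := rfl
  have hrankM : M.rank = Module.finrank F (LinearMap.range M.mulVecLin) := rfl
  have hU_le : Module.finrank F U ≤ A.rank + B.rank := by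
    rw [hU, hrankA, hrankB]
    have h1 := Submodule.finrank_sup_add_finrank_inf_eq RA RB
    omega
  have hRM_eq : LinearMap.range M.mulVecLin = U := by
    apply Submodule.eq_of_le_of_finrank_le hRM_le
    rw [← hrankM] at *
    omega
  have hfinU : Module.finrank F U = M.rank := by rw [← hRM_eq, hrankM]
  -- kernels
  have hrnA : A.rank + Module.finrank F KA = n := by
    have hh := LinearMap.finrank_range_add_finrank_ker A.mulVecLin
    rw [Module.finrank_fin_fun] at hh
    exact hh
  have hrnB : B.rank + Module.finrank F KB = n := by
    have hh := LinearMap.finrank_range_add_finrank_ker B.mulVecLin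
    rw [Module.finrank_fin_fun] at hh
    exact hh
  have hrnM : M.rank + Module.finrank F (LinearMap.ker M.mulVecLin) = n := by
    have hh := LinearMap.finrank_range_add_finrank_ker M.mulVecLin
    rw [Module.finrank_fin_fun] at hh
    exact hh
  have hW_ge : n ≤ Module.finrank F W + M.rank := by
    have h1 := Submodule.finrank_sup_add_finrank_inf_eq KA KB
    have h2 : Module.finrank F (KA ⊔ KB : Submodule F (Fin n → F)) ≤ n := by
      have := Submodule.finrank_le (KA ⊔ KB : Submodule F (Fin n → F))
      rwa [Module.finrank_fin_fun] at this
    rw [← hW] at h1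
    omega
  have hKM_eq : W = LinearMap.ker M.mulVecLin := by
    apply Submodule.eq_of_le_of_finrank_le hW_le
    omega
  have hfinW : Module.finrank F W = n - M.rank := by
    rw [hKM_eq]; omega
  -- rank of M^2
  have hM2 : (M ^ 2).mulVecLin = M.mulVecLin ∘ₗ M.mulVecLin := by
    rw [pow_two, Matrix.mulVecLin_mul]
  have hM2rank : (M ^ 2).rank + Module.finrank F (U ⊓ W : Submodule F (Fin n → F)) = M.rank := by
    have hrange : LinearMap.range (M ^ 2).mulVecLin
        = Submodule.map M.mulVecLin (LinearMap.range M.mulVecLin) := by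
      rw [hM2, LinearMap.range_comp]
    set fres := M.mulVecLin.domRestrict (LinearMap.range M.mulVecLin) with hfres
    have hr1 := LinearMap.finrank_range_add_finrank_ker fres
    have hr2 : LinearMap.range fres
        = Submodule.map M.mulVecLin (LinearMap.range M.mulVecLin) := by
      rw [hfres, LinearMap.range_domRestrict]
    have hr3 : LinearMap.ker fres
        = Submodule.comap (LinearMap.range M.mulVecLin).subtype
            (LinearMap.ker M.mulVecLin) := by
      rw [hfres, LinearMap.ker_domRestrict]
    have hr4 : Module.finrank F (LinearMap.ker fres)
        = Module.finrank F (U ⊓ W : Submodule F (Fin n → F)) := by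
      rw [hr3]
      have hinj : Function.Injective (LinearMap.range M.mulVecLin).subtype :=
        Submodule.injective_subtype _
      have heq := Submodule.map_comap_subtype (LinearMap.range M.mulVecLin)
        (LinearMap.ker M.mulVecLin)
      have hequiv := Submodule.equivMapOfInjective
        (LinearMap.range M.mulVecLin).subtype hinj
        (Submodule.comap (LinearMap.range M.mulVecLin).subtype (LinearMap.ker M.mulVecLin))
      rw [LinearEquiv.finrank_eq hequiv, heq, hRM_eq, ← hKM_eq]
    have hr5 : (M ^ 2).rank = Module.finrank F (LinearMap.range fres) := by
      rw [hr2, ← hrange]; rfl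
    have hr6 : Module.finrank F (LinearMap.range M.mulVecLin) = M.rank := rfl
    omega
  -- now k = M.rank + finrank (U ⊓ W)
  have hk' : k = M.rank + Module.finrank F (U ⊓ W : Submodule F (Fin n → F)) := by omega
  -- complement of U ⊔ W
  obtain ⟨Cf, hCf⟩ := Submodule.exists_isCompl (U ⊔ W : Submodule F (Fin n → F))
  set U' : Submodule F (Fin n → F) := U ⊔ Cf with hU'
  have hCf_rank : Module.finrank F (U ⊔ W : Submodule F (Fin n → F)) + Module.finrank F Cf
      = n := by
    have := Submodule.finrank_add_eq_of_isCompl hCf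
    rwa [Module.finrank_fin_fun] at this
  have hUW_rank := Submodule.finrank_sup_add_finrank_inf_eq U W
  have hUCf_bot : U ⊓ Cf = ⊥ := by
    rw [← le_bot_iff]
    intro x hx
    have h1 : x ∈ (U ⊔ W : Submodule F (Fin n → F)) ⊓ Cf :=
      ⟨Submodule.mem_sup_left hx.1, hx.2⟩
    rwa [disjoint_iff.1 hCf.disjoint] at h1
  have hU'_rank : Module.finrank F U' = k := by
    have h1 := Submodule.finrank_sup_add_finrank_inf_eq U Cf
    rw [hUCf_bot] at h1
    rw [finrank_bot] at h1
    rw [hU']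
    omega
  have hkn : k ≤ n := by
    rw [← hU'_rank]
    have := Submodule.finrank_le U'
    rwa [Module.finrank_fin_fun] at this
  have hU'W_top : U' ⊔ W = ⊤ := by
    rw [hU', sup_assoc, sup_comm Cf W, ← sup_assoc]
    rw [codisjoint_iff.1 hCf.codisjoint]
  -- complement of U' ⊓ W inside W
  set P : Submodule F W := (U' ⊓ W).comap W.subtype with hP
  obtain ⟨Q, hQ⟩ := Submodule.exists_isCompl P
  set W' : Submodule F (Fin n → F) := Q.map W.subtype with hW'
  have hW'leW : W' ≤ W := by
    rintro _ ⟨y, hy, rfl⟩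
    exact y.2
  have hmapP : P.map W.subtype = U' ⊓ W := by
    rw [hP, Submodule.map_comap_subtype]
    rw [inf_comm]
    exact inf_eq_left.2 inf_le_right
  have hsupW : (U' ⊓ W) ⊔ W' = W := by
    rw [← hmapP, hW', ← Submodule.map_sup, codisjoint_iff.1 hQ.codisjoint,
      Submodule.map_subtype_top]
  have hinfW' : U' ⊓ W' = ⊥ := by
    have h1 : U' ⊓ W' ≤ (U' ⊓ W) ⊓ W' := by
      intro x hx
      exact ⟨⟨hx.1, hW'leW hx.2⟩, hx.2⟩
    have h2 : (U' ⊓ W) ⊓ W' = ⊥ := by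
      rw [← hmapP, hW', ← Submodule.map_inf _ (Submodule.injective_subtype W),
        disjoint_iff.1 hQ.disjoint, Submodule.map_bot]
    rw [← le_bot_iff]
    rw [← h2]
    exact h1
  have hcompl : IsCompl U' W' := by
    constructor
    · exact disjoint_iff.2 hinfW'
    · rw [codisjoint_iff]
      have : U' ⊔ W' = U' ⊔ ((U' ⊓ W) ⊔ W') := by
        rw [← sup_assoc, sup_inf_self]
      rw [this, hsupW, hU'W_top]
  -- invariance
  have hUleU' : U ≤ U' := le_sup_left
  have hgU' : ∀ x ∈ U', gm.mulVec x ∈ U' := by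
    intro x hx
    have hgm1 : gm = 1 + A := by rw [hA]; abel
    have : gm.mulVec x = x + A.mulVec x := by
      rw [hgm1, add_mulVec, one_mulVec]
    rw [this]
    exact Submodule.add_mem _ hx (hUleU' (Submodule.mem_sup_left ⟨x, rfl⟩))
  have hhU' : ∀ x ∈ U', hm.mulVec x ∈ U' := by
    intro x hx
    have hhm1 : hm = 1 + B := by rw [hB]; abel
    have : hm.mulVec x = x + B.mulVec x := by
      rw [hhm1, add_mulVec, one_mulVec]
    rw [this]
    exact Submodule.add_mem _ hx (hUleU' (Submodule.mem_sup_right ⟨x, rfl⟩))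
  have hgW' : ∀ x ∈ W', gm.mulVec x = x := by
    intro x hx
    have hxW : x ∈ W := hW'leW hx
    have hA0 : A.mulVec x = 0 := hxW.1
    have hgm1 : gm = 1 + A := by rw [hA]; abel
    rw [hgm1, add_mulVec, one_mulVec, hA0, add_zero]
  have hhW' : ∀ x ∈ W', hm.mulVec x = x := by
    intro x hx
    have hxW : x ∈ W := hW'leW hx
    have hB0 : B.mulVec x = 0 := hxW.2
    have hhm1 : hm = 1 + B := by rw [hB]; abel
    rw [hhm1, add_mulVec, one_mulVec, hB0, add_zero]
  exact ⟨U', W', hcompl, hU'_rank, hkn, hgU', hhU', hgW', hhW'⟩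


variable {n : ℕ}

-- given invariant complement data, produce the conjugating element
theorem conj_pair_block (g h : GL (Fin n) F) {k : ℕ} (hkn : k ≤ n)
    (U' W' : Submodule F (Fin n → F)) (hcompl : IsCompl U' W')
    (hU'k : Module.finrank F U' = k)
    (hgU' : ∀ x ∈ U', (g : Matrix (Fin n) (Fin n) F).mulVec x ∈ U')
    (hhU' : ∀ x ∈ U', (h : Matrix (Fin n) (Fin n) F).mulVec x ∈ U')
    (hgW' : ∀ x ∈ W', (g : Matrix (Fin n) (Fin n) F).mulVec x = x)
    (hhW' : ∀ x ∈ W', (h : Matrix (Fin n) (Fin n) F).mulVec x = x) :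
    ∃ (z : GL (Fin n) F) (g1 h1 : GL (Fin k) F),
      ((z * g * z⁻¹ : GL (Fin n) F) : Matrix (Fin n) (Fin n) F) =
        pad hkn (g1 : Matrix (Fin k) (Fin k) F) ∧
      ((z * h * z⁻¹ : GL (Fin n) F) : Matrix (Fin n) (Fin n) F) =
        pad hkn (h1 : Matrix (Fin k) (Fin k) F) := by
  classical
  have hW'k : Module.finrank F W' = n - k := by
    have h1 := Submodule.finrank_add_eq_of_isCompl hcompl
    rw [Module.finrank_fin_fun, hU'k] at h1
    omega
  set bU : Module.Basis (Fin k) F U' := Module.finBasisOfFinrankEq F U' hU'k with hbU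
  set bW : Module.Basis (Fin (n - k)) F W' := Module.finBasisOfFinrankEq F W' hW'k with hbW
  set eqv := Submodule.prodEquivOfIsCompl U' W' hcompl with heqv
  set b0 : Module.Basis (Fin k ⊕ Fin (n - k)) F (Fin n → F) := (bU.prod bW).map eqv with hb0
  set e : Fin k ⊕ Fin (n - k) ≃ Fin n :=
    finSumFinEquiv.trans (finCongr (Nat.add_sub_cancel' hkn)) with he
  set b : Module.Basis (Fin n) F (Fin n → F) := b0.reindex e with hb
  set std : Module.Basis (Fin n) F (Fin n → F) := Pi.basisFun F (Fin n) with hstd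
  -- the conjugator z
  set zval := LinearMap.toMatrix std b (LinearMap.id) with hzval
  set zinv := LinearMap.toMatrix b std (LinearMap.id) with hzinv
  have hz1 : zval * zinv = 1 := by
    rw [hzval, hzinv, ← LinearMap.toMatrix_comp b std b LinearMap.id LinearMap.id,
      LinearMap.id_comp, LinearMap.toMatrix_id]
  have hz2 : zinv * zval = 1 := by
    rw [hzval, hzinv, ← LinearMap.toMatrix_comp std b std LinearMap.id LinearMap.id,
      LinearMap.id_comp, LinearMap.toMatrix_id]
  set z : GL (Fin n) F := ⟨zval, zinv, hz1, hz2⟩ with hz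
  -- generic facts
  have hstd_mat : ∀ m : Matrix (Fin n) (Fin n) F,
      LinearMap.toMatrix std std m.mulVecLin = m := by
    intro m
    rw [hstd, LinearMap.toMatrix_eq_toMatrix']
    have hl : Matrix.toLin' m = m.mulVecLin :=
      LinearMap.ext fun v => by rw [Matrix.toLin'_apply, Matrix.mulVecLin_apply]
    rw [← hl, LinearMap.toMatrix'_toLin']
  have hconj : ∀ x : GL (Fin n) F,
      ((z * x * z⁻¹ : GL (Fin n) F) : Matrix (Fin n) (Fin n) F)
        = LinearMap.toMatrix b b (x : Matrix (Fin n) (Fin n) F).mulVecLin := by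
    intro x
    have hcoe : ((z * x * z⁻¹ : GL (Fin n) F) : Matrix (Fin n) (Fin n) F)
        = zval * (x : Matrix (Fin n) (Fin n) F) * zinv := by
      rw [Units.val_mul, Units.val_mul]
      rfl
    rw [hcoe]
    conv_lhs => rw [show (x : Matrix (Fin n) (Fin n) F)
      = LinearMap.toMatrix std std (x : Matrix (Fin n) (Fin n) F).mulVecLin
      from (hstd_mat _).symm]
    rw [hzval, hzinv]
    rw [← LinearMap.toMatrix_comp std std b LinearMap.id
      (x : Matrix (Fin n) (Fin n) F).mulVecLin]
    rw [← LinearMap.toMatrix_comp b std b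
      (LinearMap.id ∘ₗ (x : Matrix (Fin n) (Fin n) F).mulVecLin) LinearMap.id]
    rw [LinearMap.comp_id, LinearMap.id_comp]
  -- reindex compatibility
  have hreidx : ∀ (f : (Fin n → F) →ₗ[F] (Fin n → F)),
      LinearMap.toMatrix b b f = Matrix.reindex e e (LinearMap.toMatrix b0 b0 f) := by
    intro f
    ext i j
    rw [LinearMap.toMatrix_apply, hb, Module.Basis.reindex_apply, Module.Basis.repr_reindex_apply,
      Matrix.reindex_apply, Matrix.submatrix_apply, LinearMap.toMatrix_apply]
  -- block decomposition for a single GL element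
  have hblock : ∀ x : GL (Fin n) F,
      (∀ v ∈ U', (x : Matrix (Fin n) (Fin n) F).mulVec v ∈ U') →
      (∀ v ∈ W', (x : Matrix (Fin n) (Fin n) F).mulVec v = v) →
      ∃ x1 : GL (Fin k) F,
        ((z * x * z⁻¹ : GL (Fin n) F) : Matrix (Fin n) (Fin n) F) =
          pad hkn (x1 : Matrix (Fin k) (Fin k) F) := by
    intro x hxU hxW
    set xm := (x : Matrix (Fin n) (Fin n) F) with hxm
    -- restriction to U'
    have hres : ∀ v ∈ U', xm.mulVecLin v ∈ U' := by
      intro v hv; rw [Matrix.mulVecLin_apply]; exact hxU v hv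
    set xU : U' →ₗ[F] U' := LinearMap.restrict xm.mulVecLin hres with hxU'
    have hinj : Function.Injective xm.mulVecLin := by
      intro a c hac
      have h2 := congrArg (((x⁻¹ : GL (Fin n) F) : Matrix (Fin n) (Fin n) F).mulVec) hac
      rw [Matrix.mulVecLin_apply, Matrix.mulVecLin_apply, mulVec_mulVec, mulVec_mulVec,
        show ((x⁻¹ : GL (Fin n) F) : Matrix (Fin n) (Fin n) F) * xm = 1 from x.inv_mul,
        one_mulVec, one_mulVec] at h2
      exact h2
    have hinjU : Function.Injective xU := by
      intro a c hac
      apply Subtype.ext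
      apply hinj
      have h1 := congrArg (Subtype.val) hac
      rwa [LinearMap.restrict_apply, LinearMap.restrict_apply] at h1
    have hbij : Function.Bijective xU :=
      ⟨hinjU, (LinearMap.injective_iff_surjective).1 hinjU⟩
    set xeq : U' ≃ₗ[F] U' := LinearEquiv.ofBijective xU hbij with hxeq
    set G := LinearMap.toMatrix bU bU xU with hG
    set Ginv := LinearMap.toMatrix bU bU (xeq.symm : U' →ₗ[F] U') with hGinv
    have hcompid : xU ∘ₗ (xeq.symm : U' →ₗ[F] U') = LinearMap.id :=
      LinearMap.ext fun v => xeq.apply_symm_apply v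
    have hcompid2 : (xeq.symm : U' →ₗ[F] U') ∘ₗ xU = LinearMap.id :=
      LinearMap.ext fun v => xeq.symm_apply_apply v
    have hGG : G * Ginv = 1 := by
      rw [hG, hGinv, ← LinearMap.toMatrix_comp bU bU bU, hcompid, LinearMap.toMatrix_id]
    have hGG2 : Ginv * G = 1 := by
      rw [hG, hGinv, ← LinearMap.toMatrix_comp bU bU bU, hcompid2, LinearMap.toMatrix_id]
    refine ⟨⟨G, Ginv, hGG, hGG2⟩, ?_⟩
    rw [hconj x, hreidx]
    have hblk : LinearMap.toMatrix b0 b0 xm.mulVecLin =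
        Matrix.fromBlocks G 0 0 (1 : Matrix (Fin (n - k)) (Fin (n - k)) F) := by
      ext i j
      have hrepr : ∀ (y : Fin n → F) (i : Fin k ⊕ Fin (n - k)),
          b0.repr y i = (bU.prod bW).repr (eqv.symm y) i := fun _ _ => rfl
      rcases j with j | j
      · -- column in U'
        have hbj : b0 (Sum.inl j) = (bU j : Fin n → F) := by
          rw [hb0, Module.Basis.map_apply]
          have : (bU.prod bW) (Sum.inl j) = (bU j, (0 : W')) :=
            Prod.ext (Module.Basis.prod_apply_inl_fst _ _ _) (Module.Basis.prod_apply_inl_snd _ _ _)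
          rw [this, heqv, Submodule.coe_prodEquivOfIsCompl']
          simp
        have hxbj : xm.mulVecLin (b0 (Sum.inl j)) = ((xU (bU j) : U') : Fin n → F) := by
          rw [hbj, LinearMap.restrict_apply]
        have hsymm : eqv.symm (xm.mulVecLin (b0 (Sum.inl j))) = (xU (bU j), (0 : W')) := by
          rw [hxbj]
          exact Submodule.prodEquivOfIsCompl_symm_apply_left (p := U') (q := W') hcompl (xU (bU j))
        rcases i with i | i
        · rw [LinearMap.toMatrix_apply, hrepr, hsymm, Module.Basis.prod_repr_inl]
          rw [Matrix.fromBlocks_apply₁₁, hG, LinearMap.toMatrix_apply]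
        · rw [LinearMap.toMatrix_apply, hrepr, hsymm, Module.Basis.prod_repr_inr]
          rw [Matrix.fromBlocks_apply₂₁]
          simp only [map_zero, Finsupp.coe_zero, Pi.zero_apply, Matrix.zero_apply]
      · -- column in W'
        have hbj : b0 (Sum.inr j) = (bW j : Fin n → F) := by
          rw [hb0, Module.Basis.map_apply]
          have : (bU.prod bW) (Sum.inr j) = ((0 : U'), bW j) :=
            Prod.ext (Module.Basis.prod_apply_inr_fst _ _ _) (Module.Basis.prod_apply_inr_snd _ _ _)
          rw [this, heqv, Submodule.coe_prodEquivOfIsCompl']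
          simp
        have hxbj : xm.mulVecLin (b0 (Sum.inr j)) = ((bW j : W') : Fin n → F) := by
          rw [hbj, Matrix.mulVecLin_apply]
          exact hxW _ (bW j).2
        have hsymm : eqv.symm (xm.mulVecLin (b0 (Sum.inr j))) = ((0 : U'), bW j) := by
          rw [hxbj]
          exact Submodule.prodEquivOfIsCompl_symm_apply_right (p := U') (q := W') hcompl (bW j)
        rcases i with i | i
        · rw [LinearMap.toMatrix_apply, hrepr, hsymm, Module.Basis.prod_repr_inl]
          rw [Matrix.fromBlocks_apply₁₂]
          simp only [map_zero, Finsupp.coe_zero, Pi.zero_apply, Matrix.zero_apply]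
        · rw [LinearMap.toMatrix_apply, hrepr, hsymm, Module.Basis.prod_repr_inr]
          rw [Matrix.fromBlocks_apply₂₂, Module.Basis.repr_self]
          rw [Matrix.one_apply, Finsupp.single_apply]
          simp [eq_comm]
    rw [hblk]
    rfl
  obtain ⟨g1, hg1⟩ := hblock g hgU' hgW'
  obtain ⟨h1, hh1⟩ := hblock h hhU' hhW'
  exact ⟨z, g1, h1, hg1, hh1⟩

end NFT

/-- Normal form of triples: if `ℓ(gh) = ℓ(g) + ℓ(h)` and
`k = 2·rank(gh - 1) - rank((gh - 1)²)`, then `k ≤ n` and the pair `(g, h)` is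
simultaneously conjugate to a pair `(ḡ ⊕ I_{n-k}, h̄ ⊕ I_{n-k})` with
`ḡ, h̄ ∈ GL_k(𝔽_q)`. -/
theorem normal_form_of_triples {n k : ℕ} (g h : GL (Fin n) F)
    (hlen : reflLength (g * h) = reflLength g + reflLength h)
    (hk : k = 2 * (((g * h : GL (Fin n) F) : Matrix (Fin n) (Fin n) F) - 1).rank -
      ((((g * h : GL (Fin n) F) : Matrix (Fin n) (Fin n) F) - 1) ^ 2).rank) :
    ∃ (hkn : k ≤ n) (z : GL (Fin n) F) (g1 h1 : GL (Fin k) F),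
      ((z * g * z⁻¹ : GL (Fin n) F) : Matrix (Fin n) (Fin n) F) =
        pad hkn (g1 : Matrix (Fin k) (Fin k) F) ∧
      ((z * h * z⁻¹ : GL (Fin n) F) : Matrix (Fin n) (Fin n) F) =
        pad hkn (h1 : Matrix (Fin k) (Fin k) F) := by
  classical
  have e1 := NFT.reflLength_eq_rank (g * h)
  have e2 := NFT.reflLength_eq_rank g
  have e3 := NFT.reflLength_eq_rank h
  rw [e1, e2, e3] at hlen
  rw [Units.val_mul] at hlen hk
  have hadd : ((g : Matrix (Fin n) (Fin n) F) * (h : Matrix (Fin n) (Fin n) F) - 1).rank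
      = ((g : Matrix (Fin n) (Fin n) F) - 1).rank
        + ((h : Matrix (Fin n) (Fin n) F) - 1).rank := hlen
  obtain ⟨U', W', hcompl, hU'k, hkn, hgU', hhU', hgW', hhW'⟩ :=
    NFT.exists_invariant_decomp g h hadd hk
  obtain ⟨z, g1, h1, hz1, hz2⟩ :=
    NFT.conj_pair_block g h hkn U' W' hcompl hU'k hgU' hhU' hgW' hhW'
  exact ⟨hkn, z, g1, h1, hz1, hz2⟩
end

section
/- Let ξ, η ∈ 𝔽_q \ {0} and ξ′, η′ ∈ 𝔽_q \ {0, 1}. Let N be the number of ordered pairs (g, h) ∈ GL_2(𝔽_q) × GL_2(𝔽_q) with g conjugate to r(ξ), h conjugate to r(η), and g·h = diag(ξ′, η′). Then: N = q² + q if ξ = η = ξ′ = η′; N = 2q − 1 if ξ′ ≠ η′ and {ξ′, η′} = {ξ, η}; N = q − 1 if ξ′η′ = ξη, ξ′ ≠ η′ and {ξ′, η′} ≠ {ξ, η}; and N = 0 in all other cases (in particular whenever ξ′η′ ≠ ξη). -/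
open Matrix

variable {F : Type*} [Field F] [Fintype F] [DecidableEq F]

/-- The representative reflection of modified type `(1)_{t-ξ}`:
`diag(ξ, 1)` if `ξ ≠ 1`, and the transvection `[[1,1],[0,1]]` if `ξ = 1`. -/
def refl2 (ξ : F) : Matrix (Fin 2) (Fin 2) F :=
  if ξ = 1 then !![1, 1; 0, 1] else !![ξ, 0; 0, 1]

set_option linter.unusedSectionVars false
set_option linter.unusedVariables false
set_option maxHeartbeats 1000000

/-- similarity of 2×2 matrices via GL. -/
def MSim (m n : Matrix (Fin 2) (Fin 2) F) : Prop :=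
  ∃ z : GL (Fin 2) F,
    (z : Matrix (Fin 2) (Fin 2) F) * m * ((z⁻¹ : GL (Fin 2) F) : Matrix (Fin 2) (Fin 2) F) = n

lemma coe_inv_mul_self (z : GL (Fin 2) F) :
    ((z⁻¹ : GL (Fin 2) F) : Matrix (Fin 2) (Fin 2) F) * (z : Matrix (Fin 2) (Fin 2) F) = 1 := by
  rw [← Units.val_mul, inv_mul_cancel, Units.val_one]

lemma coe_self_mul_inv (z : GL (Fin 2) F) :
    (z : Matrix (Fin 2) (Fin 2) F) * ((z⁻¹ : GL (Fin 2) F) : Matrix (Fin 2) (Fin 2) F) = 1 := by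
  rw [← Units.val_mul, mul_inv_cancel, Units.val_one]

lemma MSim.symm {m n : Matrix (Fin 2) (Fin 2) F} (h : MSim m n) : MSim n m := by
  obtain ⟨z, hz⟩ := h
  refine ⟨z⁻¹, ?_⟩
  subst hz
  rw [inv_inv]
  simp only [mul_assoc]
  rw [coe_inv_mul_self, mul_one, ← mul_assoc, coe_inv_mul_self, one_mul]

lemma MSim.trans {m n p : Matrix (Fin 2) (Fin 2) F} (h1 : MSim m n) (h2 : MSim n p) :
    MSim m p := by
  obtain ⟨z, hz⟩ := h1
  obtain ⟨w, hw⟩ := h2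
  refine ⟨w * z, ?_⟩
  subst hz hw
  simp only [_root_.mul_inv_rev, Units.val_mul, mul_assoc]

lemma MSim.mk' {m n P : Matrix (Fin 2) (Fin 2) F} (hP : P.det ≠ 0)
    (h : m * P = P * n) : MSim m n := by
  refine ⟨(P.nonsingInvUnit (isUnit_iff_ne_zero.2 hP))⁻¹, ?_⟩
  have h2 : (((P.nonsingInvUnit (isUnit_iff_ne_zero.2 hP))⁻¹ : GL (Fin 2) F) :
      Matrix (Fin 2) (Fin 2) F) = P⁻¹ := rfl
  rw [inv_inv, h2, mul_assoc]
  show P⁻¹ * (m * P) = n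
  rw [h, ← mul_assoc, Matrix.nonsing_inv_mul _ (isUnit_iff_ne_zero.2 hP), one_mul]

lemma msim_companion (m : Matrix (Fin 2) (Fin 2) F) (hm : ∀ c : F, m ≠ c • 1) :
    MSim m !![0, -m.det; 1, m.trace] := by
  rcases ne_or_eq (m 1 0) 0 with hc | hc
  · refine MSim.mk' (P := !![1, m 0 0; 0, m 1 0]) ?_ ?_
    · simpa [Matrix.det_fin_two] using hc
    · ext i j
      fin_cases i <;> fin_cases j <;>
        simp [Matrix.mul_apply, Fin.sum_univ_two, Matrix.det_fin_two, Matrix.trace_fin_two] <;>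
        ring
  · rcases ne_or_eq (m 0 1) 0 with hb | hb
    · refine MSim.mk' (P := !![0, m 0 1; 1, m 1 1]) ?_ ?_
      · simpa [Matrix.det_fin_two] using hb
      · ext i j
        fin_cases i <;> fin_cases j <;>
          simp [Matrix.mul_apply, Fin.sum_univ_two, Matrix.det_fin_two, Matrix.trace_fin_two,
            hc] <;> ring
    · rcases ne_or_eq (m 0 0) (m 1 1) with ha | ha
      · refine MSim.mk' (P := !![1, m 0 0; 1, m 1 1]) ?_ ?_
        · simp only [Matrix.det_fin_two_of, one_mul, mul_one]
          intro h
          exact ha (by linear_combination -h)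
        · ext i j
          fin_cases i <;> fin_cases j <;>
            simp [Matrix.mul_apply, Fin.sum_univ_two, Matrix.det_fin_two, Matrix.trace_fin_two,
              hc, hb] <;> ring
      · refine absurd ?_ (hm (m 0 0))
        ext i j
        fin_cases i <;> fin_cases j <;>
          simp [Matrix.one_apply, hc, hb, ha]

lemma MSim.trace_eq {m n : Matrix (Fin 2) (Fin 2) F} (h : MSim m n) : m.trace = n.trace := by
  obtain ⟨z, hz⟩ := h
  exact (hz ▸ Matrix.trace_units_conj z m).symm

lemma MSim.det_eq {m n : Matrix (Fin 2) (Fin 2) F} (h : MSim m n) : m.det = n.det := by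
  obtain ⟨z, hz⟩ := h
  exact (hz ▸ Matrix.det_units_conj z m).symm

lemma coe_self_mul_inv' (z : GL (Fin 2) F) :
    (z : Matrix (Fin 2) (Fin 2) F) * ((z⁻¹ : GL (Fin 2) F) : Matrix (Fin 2) (Fin 2) F) = 1 := by
  rw [← Units.val_mul, mul_inv_cancel, Units.val_one]

lemma MSim.ne_one {m n : Matrix (Fin 2) (Fin 2) F} (h : MSim m n) (hn : n ≠ 1) : m ≠ 1 := by
  obtain ⟨z, hz⟩ := h
  rintro rfl
  rw [mul_one, coe_self_mul_inv'] at hz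
  exact hn hz.symm

lemma refl2_trace (ζ : F) : (refl2 ζ).trace = ζ + 1 := by
  unfold refl2; split <;> simp_all [Matrix.trace_fin_two]

lemma refl2_det (ζ : F) : (refl2 ζ).det = ζ := by
  unfold refl2; split <;> simp_all [Matrix.det_fin_two]

lemma refl2_not_scalar (ζ : F) (c : F) : refl2 ζ ≠ c • (1 : Matrix (Fin 2) (Fin 2) F) := by
  unfold refl2
  split_ifs with h
  · intro hh
    have := congrFun (congrFun hh 0) 1
    simp [Matrix.one_apply] at this
  · intro hh
    have h1 := congrFun (congrFun hh 0) 0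
    have h2 := congrFun (congrFun hh 1) 1
    simp [Matrix.one_apply] at h1 h2
    exact h (h1.trans h2.symm)

lemma refl2_ne_one (ζ : F) : refl2 ζ ≠ 1 := by
  intro h
  exact refl2_not_scalar ζ 1 (by rwa [one_smul])

lemma conj_refl2_iff (ζ : F) (g : GL (Fin 2) F) :
    (∃ z : GL (Fin 2) F, ((z * g * z⁻¹ : GL (Fin 2) F) : Matrix (Fin 2) (Fin 2) F) = refl2 ζ) ↔
      ((g : Matrix (Fin 2) (Fin 2) F).trace = ζ + 1 ∧
       (g : Matrix (Fin 2) (Fin 2) F).det = ζ ∧ (g : Matrix (Fin 2) (Fin 2) F) ≠ 1) := by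
  have hsim : (∃ z : GL (Fin 2) F,
      ((z * g * z⁻¹ : GL (Fin 2) F) : Matrix (Fin 2) (Fin 2) F) = refl2 ζ) ↔
      MSim (g : Matrix (Fin 2) (Fin 2) F) (refl2 ζ) := by
    simp only [MSim, Units.val_mul]
  rw [hsim]
  constructor
  · intro h
    exact ⟨h.trace_eq.trans (refl2_trace ζ), h.det_eq.trans (refl2_det ζ),
      h.ne_one (refl2_ne_one ζ)⟩
  · rintro ⟨ht, hd, h1⟩
    have hns : ∀ c : F, (g : Matrix (Fin 2) (Fin 2) F) ≠ c • 1 := by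
      intro c hgc
      rw [hgc] at ht hd
      rw [Matrix.trace_smul, Matrix.trace_one] at ht
      rw [Matrix.det_smul, Matrix.det_one] at hd
      simp only [Fintype.card_fin, smul_eq_mul, mul_one] at ht hd
      have hc1 : c = 1 := by
        have hc : (c - 1) ^ 2 = 0 := by
          push_cast at ht
          linear_combination hd - ht
        have := pow_eq_zero_iff (n := 2) (by norm_num) |>.mp hc
        exact sub_eq_zero.mp this
      rw [hc1, one_smul] at hgc
      exact h1 hgc
    have h2 := msim_companion (g : Matrix (Fin 2) (Fin 2) F) hns
    have h3 := msim_companion (refl2 ζ) (refl2_not_scalar ζ)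
    rw [refl2_trace, refl2_det] at h3
    rw [ht, hd] at h2
    exact h2.trans h3.symm

def Pred (ξ η ξ' η' : F) (m : Matrix (Fin 2) (Fin 2) F) : Prop :=
  m.trace = ξ + 1 ∧ m.det = ξ ∧ m ≠ 1 ∧ ξ' * η' = ξ * η ∧
    m 1 1 * ξ' + m 0 0 * η' = ξ * (η + 1) ∧ m ≠ !![ξ', 0; 0, η']

lemma trace_adj_mul_diag (m : Matrix (Fin 2) (Fin 2) F) (x y : F) :
    (m.adjugate * !![x, 0; 0, y]).trace = m 1 1 * x + m 0 0 * y := by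
  rw [Matrix.adjugate_fin_two]
  rw [show (!![m 1 1, -(m 0 1); -(m 1 0), m 0 0] * !![x, 0; 0, y]) =
    !![m 1 1 * x, -(m 0 1) * y; -(m 1 0) * x, m 0 0 * y] from by
      ext i j; fin_cases i <;> fin_cases j <;>
        simp [Matrix.mul_apply, Fin.sum_univ_two]]
  simp [Matrix.trace_fin_two]

lemma det_diag2 (x y : F) : (!![x, 0; 0, y] : Matrix (Fin 2) (Fin 2) F).det = x * y := by
  simp [Matrix.det_fin_two_of]

lemma card_S (ξ η ξ' η' : F) (hξ : ξ ≠ 0) (hη : η ≠ 0) (hξ'0 : ξ' ≠ 0) (hη'0 : η' ≠ 0) :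
    Nat.card {gh : GL (Fin 2) F × GL (Fin 2) F |
      (∃ z : GL (Fin 2) F,
        ((z * gh.1 * z⁻¹ : GL (Fin 2) F) : Matrix (Fin 2) (Fin 2) F) = refl2 ξ) ∧
      (∃ z : GL (Fin 2) F,
        ((z * gh.2 * z⁻¹ : GL (Fin 2) F) : Matrix (Fin 2) (Fin 2) F) = refl2 η) ∧
      ((gh.1 * gh.2 : GL (Fin 2) F) : Matrix (Fin 2) (Fin 2) F) = !![ξ', 0; 0, η']} =
    Nat.card {m : Matrix (Fin 2) (Fin 2) F // Pred ξ η ξ' η' m} := by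
  have hDdet : (!![ξ', 0; 0, η'] : Matrix (Fin 2) (Fin 2) F).det = ξ' * η' := det_diag2 ξ' η'
  have hDu : IsUnit (!![ξ', 0; 0, η'] : Matrix (Fin 2) (Fin 2) F).det := by
    rw [hDdet]; exact isUnit_iff_ne_zero.2 (mul_ne_zero hξ'0 hη'0)
  have hmu : ∀ t : {m : Matrix (Fin 2) (Fin 2) F // Pred ξ η ξ' η' m}, IsUnit t.1.det :=
    fun t => by rw [t.2.2.1]; exact isUnit_iff_ne_zero.2 hξ
  apply Nat.card_congr
  refine ⟨fun s => ⟨(s.1.1 : Matrix (Fin 2) (Fin 2) F), ?_⟩,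
    fun t => ⟨(t.1.nonsingInvUnit (hmu t),
      (t.1.nonsingInvUnit (hmu t))⁻¹ * Matrix.nonsingInvUnit _ hDu), ?_⟩, ?_, ?_⟩
  · -- forward proof
    obtain ⟨⟨g, h⟩, hg, hh, hgh⟩ := s
    rw [conj_refl2_iff] at hg hh
    obtain ⟨hgt, hgd, hg1⟩ := hg
    obtain ⟨hht, hhd, hh1⟩ := hh
    have hghm : (g : Matrix (Fin 2) (Fin 2) F) * (h : Matrix (Fin 2) (Fin 2) F)
        = !![ξ', 0; 0, η'] := by
      rw [← Units.val_mul]; exact hgh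
    have hE : ξ' * η' = ξ * η := by
      have := congrArg Matrix.det hghm
      rw [Matrix.det_mul, hgd, hhd, hDdet] at this
      exact this.symm
    refine ⟨hgt, hgd, hg1, hE, ?_, ?_⟩
    · have hadj : (g : Matrix (Fin 2) (Fin 2) F).adjugate * !![ξ', 0; 0, η']
          = ξ • (h : Matrix (Fin 2) (Fin 2) F) := by
        rw [← hghm, ← mul_assoc, Matrix.adjugate_mul, hgd, Matrix.smul_mul, one_mul]
      have := congrArg Matrix.trace hadj
      rw [trace_adj_mul_diag, Matrix.trace_smul, hht, smul_eq_mul] at this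
      exact this
    · intro hgD
      apply hh1
      have h2 : (g : Matrix (Fin 2) (Fin 2) F) * (h : Matrix (Fin 2) (Fin 2) F)
          = (g : Matrix (Fin 2) (Fin 2) F) := by rw [hghm, hgD]
      calc (h : Matrix (Fin 2) (Fin 2) F)
          = ((g⁻¹ : GL (Fin 2) F) : Matrix (Fin 2) (Fin 2) F)
            * ((g : Matrix (Fin 2) (Fin 2) F) * (h : Matrix (Fin 2) (Fin 2) F)) := by
            rw [← mul_assoc, ← Units.val_mul, inv_mul_cancel, Units.val_one, one_mul]
        _ = 1 := by rw [h2, ← Units.val_mul, inv_mul_cancel, Units.val_one]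
  · -- membership proof for invFun
    obtain ⟨hmt, hmd, hm1, hE, htr, hmD⟩ := t.2
    have hcg : ((t.1.nonsingInvUnit (hmu t) : GL (Fin 2) F) : Matrix (Fin 2) (Fin 2) F)
        = t.1 := rfl
    have hcginv : (((t.1.nonsingInvUnit (hmu t))⁻¹ : GL (Fin 2) F) : Matrix (Fin 2) (Fin 2) F)
        = t.1⁻¹ := rfl
    have hch : (((t.1.nonsingInvUnit (hmu t))⁻¹ * Matrix.nonsingInvUnit _ hDu : GL (Fin 2) F) :
        Matrix (Fin 2) (Fin 2) F) = t.1⁻¹ * !![ξ', 0; 0, η'] := rfl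
    refine ⟨?_, ?_, ?_⟩
    · rw [conj_refl2_iff, hcg]
      exact ⟨hmt, hmd, hm1⟩
    · rw [conj_refl2_iff, hch]
      have hinv : t.1⁻¹ = ξ⁻¹ • t.1.adjugate := by
        rw [Matrix.inv_def, hmd, Ring.inverse_eq_inv']
      refine ⟨?_, ?_, ?_⟩
      · rw [hinv, Matrix.smul_mul, Matrix.trace_smul, trace_adj_mul_diag, htr, smul_eq_mul]
        field_simp
      · rw [Matrix.det_mul, Matrix.det_nonsing_inv, hmd, Ring.inverse_eq_inv', hDdet, hE]
        field_simp
      · intro hone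
        apply hmD
        have := congrArg (fun x => t.1 * x) hone
        simp only [mul_one] at this
        rw [← mul_assoc, Matrix.mul_nonsing_inv _ (hmu t), one_mul] at this
        exact this.symm
    · show ((_ * (_⁻¹ * _) : GL (Fin 2) F) : Matrix (Fin 2) (Fin 2) F) = _
      rw [mul_inv_cancel_left]
      rfl
  · -- left inverse
    intro s
    obtain ⟨⟨g, h⟩, hg, hh, hgh⟩ := s
    apply Subtype.ext
    apply Prod.ext
    · exact Units.ext rfl
    · apply Units.ext
      show ((g : Matrix (Fin 2) (Fin 2) F))⁻¹ * !![ξ', 0; 0, η']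
          = (h : Matrix (Fin 2) (Fin 2) F)
      dsimp only at hgh
      rw [← hgh, ← Matrix.coe_units_inv, ← Units.val_mul, inv_mul_cancel_left]
  · -- right inverse
    intro t
    exact Subtype.ext rfl

/-- pairs with given nonzero product -/
lemma card_pairs_ne (k : F) (hk : k ≠ 0) :
    Nat.card {p : F × F // p.1 * p.2 = k} = Fintype.card F - 1 := by
  have e : {p : F × F // p.1 * p.2 = k} ≃ {b : F // b ≠ 0} := by
    refine ⟨fun p => ⟨p.1.1, fun h => hk (by rw [← p.2, h, zero_mul])⟩,
      fun b => ⟨(b.1, b.1⁻¹ * k), by rw [← mul_assoc, mul_inv_cancel₀ b.2, one_mul]⟩, ?_, ?_⟩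
    · rintro ⟨⟨b, c⟩, hp⟩
      simp only at hp ⊢
      have hb : b ≠ 0 := fun h => hk (by rw [← hp, h, zero_mul])
      apply Subtype.ext
      simp only [Prod.mk.injEq]
      refine ⟨trivial, ?_⟩
      field_simp [← hp]
      exact hp.symm
    · rintro ⟨b, hb⟩
      rfl
  rw [Nat.card_congr e, Nat.card_congr (unitsEquivNeZero (G₀ := F)).symm, Nat.card_units,
    Nat.card_eq_fintype_card]

lemma card_pairs_zero :
    Nat.card {p : F × F // p.1 * p.2 = (0 : F)} = 2 * Fintype.card F - 1 := by
  have e : {p : F × F // p.1 * p.2 = (0 : F)} ≃ F ⊕ {b : F // b ≠ 0} := by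
    refine ⟨fun p => if h : p.1.1 = 0 then Sum.inl p.1.2 else Sum.inr ⟨p.1.1, h⟩,
      fun x => Sum.casesOn x (fun c => ⟨(0, c), by simp⟩)
        (fun b => ⟨(b.1, 0), by simp⟩), ?_, ?_⟩
    · rintro ⟨⟨b, c⟩, hp⟩
      simp only at hp
      by_cases h : b = 0
      · subst h
        simp only [dif_pos]
      · simp only [dif_neg h]
        apply Subtype.ext
        simp only [Prod.mk.injEq]
        refine ⟨trivial, ?_⟩
        rcases mul_eq_zero.mp hp with h' | h'
        · exact absurd h' h
        · exact h'.symm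
    · rintro (c | ⟨b, hb⟩)
      · simp
      · simp [hb]
  rw [Nat.card_congr e, Nat.card_sum, Nat.card_eq_fintype_card,
    Nat.card_congr (unitsEquivNeZero (G₀ := F)).symm, Nat.card_units,
    Nat.card_eq_fintype_card]
  have : 1 ≤ Fintype.card F := Fintype.card_pos
  omega

lemma card_pairs (k : F) :
    Nat.card {p : F × F // p.1 * p.2 = k} =
      if k = 0 then 2 * Fintype.card F - 1 else Fintype.card F - 1 := by
  split_ifs with h
  · subst h; exact card_pairs_zero
  · exact card_pairs_ne k h

/-- generic: when the diagonal entries are forced, the solution set is a product-hyperbola -/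
lemma card_pred_forced (ξ η ξ' η' a₀ d₀ k : F)
    (h1 : a₀ + d₀ = ξ + 1)
    (h2 : a₀ * d₀ - k = ξ)
    (hE : ξ' * η' = ξ * η)
    (htr : d₀ * ξ' + a₀ * η' = ξ * (η + 1))
    (huniq : ∀ a d : F, a + d = ξ + 1 → d * ξ' + a * η' = ξ * (η + 1) → a = a₀)
    (hne1 : ¬(a₀ = 1 ∧ d₀ = 1 ∧ k = 0))
    (hneD : ¬(a₀ = ξ' ∧ d₀ = η' ∧ k = 0)) :
    Nat.card {m : Matrix (Fin 2) (Fin 2) F // Pred ξ η ξ' η' m} =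
      Nat.card {p : F × F // p.1 * p.2 = k} := by
  apply Nat.card_congr
  have key : ∀ m : Matrix (Fin 2) (Fin 2) F, Pred ξ η ξ' η' m →
      m 0 0 = a₀ ∧ m 1 1 = d₀ ∧ m 0 1 * m 1 0 = k := by
    intro m ⟨ht, hd, hm1, _, htrm, hmD⟩
    rw [Matrix.trace_fin_two] at ht
    have ha : m 0 0 = a₀ := huniq (m 0 0) (m 1 1) ht (by linear_combination htrm)
    have hdm : m 1 1 = d₀ := by linear_combination ht - h1 - ha
    rw [Matrix.det_fin_two] at hd
    refine ⟨ha, hdm, ?_⟩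
    rw [ha, hdm] at hd
    linear_combination -hd + h2
  refine ⟨fun m => ⟨(m.1 0 1, m.1 1 0), (key m.1 m.2).2.2⟩,
    fun p => ⟨!![a₀, p.1.1; p.1.2, d₀], ?_, ?_, ?_, hE, ?_, ?_⟩, ?_, ?_⟩
  · rw [Matrix.trace_fin_two]
    show a₀ + d₀ = ξ + 1
    exact h1
  · rw [Matrix.det_fin_two]
    show a₀ * d₀ - p.1.1 * p.1.2 = ξ
    rw [p.2]; exact h2
  · intro hm
    apply hne1
    have e00 := congrFun (congrFun hm 0) 0
    have e11 := congrFun (congrFun hm 1) 1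
    have e01 := congrFun (congrFun hm 0) 1
    simp [Matrix.one_apply] at e00 e11 e01
    exact ⟨e00, e11, by rw [← p.2, e01, zero_mul]⟩
  · show d₀ * ξ' + a₀ * η' = ξ * (η + 1)
    exact htr
  · intro hm
    apply hneD
    have e00 := congrFun (congrFun hm 0) 0
    have e11 := congrFun (congrFun hm 1) 1
    have e01 := congrFun (congrFun hm 0) 1
    simp at e00 e11 e01
    exact ⟨e00, e11, by rw [← p.2, e01, zero_mul]⟩
  · intro m
    obtain ⟨ha, hd, hbc⟩ := key m.1 m.2
    apply Subtype.ext
    ext i j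
    fin_cases i <;> fin_cases j <;> simp [ha, hd]
  · intro p
    apply Subtype.ext
    apply Prod.ext <;> simp

lemma card_pred_all (ξ : F) (hξ0 : ξ ≠ 0) (hξ1 : ξ ≠ 1) :
    Nat.card {m : Matrix (Fin 2) (Fin 2) F // Pred ξ ξ ξ ξ m} =
      Fintype.card F ^ 2 + Fintype.card F := by
  have e : {m : Matrix (Fin 2) (Fin 2) F // Pred ξ ξ ξ ξ m} ≃
      Σ a : F, {p : F × F // p.1 * p.2 = a * (ξ + 1 - a) - ξ} := by
    refine ⟨fun m => ⟨m.1 0 0, (m.1 0 1, m.1 1 0), ?_⟩,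
      fun x => ⟨!![x.1, x.2.1.1; x.2.1.2, ξ + 1 - x.1], ?_, ?_, ?_, rfl, ?_, ?_⟩, ?_, ?_⟩
    · obtain ⟨ht, hd, _, _, _, _⟩ := m.2
      rw [Matrix.trace_fin_two] at ht
      rw [Matrix.det_fin_two] at hd
      linear_combination -hd + (m.1 0 0) * ht
    · rw [Matrix.trace_fin_two]
      show x.1 + (ξ + 1 - x.1) = ξ + 1
      ring
    · rw [Matrix.det_fin_two]
      show x.1 * (ξ + 1 - x.1) - x.2.1.1 * x.2.1.2 = ξ
      rw [x.2.2]; ring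
    · intro hm
      apply hξ1
      have e00 := congrFun (congrFun hm 0) 0
      have e11 := congrFun (congrFun hm 1) 1
      simp [Matrix.one_apply] at e00 e11
      linear_combination e00 + e11
    · show (ξ + 1 - x.1) * ξ + x.1 * ξ = ξ * (ξ + 1)
      ring
    · intro hm
      apply hξ1
      have e00 := congrFun (congrFun hm 0) 0
      have e11 := congrFun (congrFun hm 1) 1
      simp at e00 e11
      linear_combination -e00 - e11
    · intro m
      obtain ⟨ht, _, _, _, _, _⟩ := m.2
      rw [Matrix.trace_fin_two] at ht
      apply Subtype.ext
      ext i j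
      have h11 : m.1 1 1 = ξ + 1 - m.1 0 0 := by linear_combination ht
      fin_cases i <;> fin_cases j <;> simp [h11]
    · intro x
      rfl
  rw [Nat.card_congr e, Nat.card_eq_fintype_card, Fintype.card_sigma]
  have hfib : ∀ a : F, Fintype.card {p : F × F // p.1 * p.2 = a * (ξ + 1 - a) - ξ} =
      if a = 1 ∨ a = ξ then 2 * Fintype.card F - 1 else Fintype.card F - 1 := by
    intro a
    rw [← Nat.card_eq_fintype_card, card_pairs]
    have hcond : (a * (ξ + 1 - a) - ξ = 0) ↔ (a = 1 ∨ a = ξ) := by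
      constructor
      · intro h
        have h' : (a - 1) * (a - ξ) = 0 := by linear_combination -h
        rcases mul_eq_zero.mp h' with h'' | h''
        · exact Or.inl (sub_eq_zero.mp h'')
        · exact Or.inr (sub_eq_zero.mp h'')
      · rintro (rfl | rfl) <;> ring
    rw [if_congr hcond rfl rfl]
  simp only [hfib]
  rw [Finset.sum_ite, Finset.sum_const, Finset.sum_const, smul_eq_mul, smul_eq_mul]
  have hfilter : Finset.univ.filter (fun a : F => a = 1 ∨ a = ξ) = {1, ξ} := by
    ext a; simp
  have hcard2 : ({1, ξ} : Finset F).card = 2 := Finset.card_pair (Ne.symm hξ1)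
  have hcardnot : (Finset.univ.filter (fun a : F => ¬(a = 1 ∨ a = ξ))).card
      = Fintype.card F - 2 := by
    have hh := Finset.card_filter_add_card_filter_not
      (s := (Finset.univ : Finset F)) (p := fun a : F => a = 1 ∨ a = ξ)
    rw [hfilter, hcard2] at hh
    rw [Finset.card_univ] at hh
    omega
  rw [hfilter, hcard2, hcardnot]
  have h2 : 2 ≤ Fintype.card F := Fintype.one_lt_card
  obtain ⟨r, hr⟩ : ∃ r, Fintype.card F = r + 2 := ⟨Fintype.card F - 2, by omega⟩
  rw [hr]
  have e1 : 2 * (r + 2) - 1 = 2 * r + 3 := by omega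
  have e2 : r + 2 - 1 = r + 1 := by omega
  have e3 : r + 2 - 2 = r := by omega
  rw [e1, e2, e3]
  ring

lemma pair_eq_cases {ξ η ξ' η' : F} (hd : ξ' ≠ η') (hset : ({ξ', η'} : Finset F) = {ξ, η}) :
    (ξ' = ξ ∧ η' = η) ∨ (ξ' = η ∧ η' = ξ) := by
  have h1 : ξ' ∈ ({ξ, η} : Finset F) := by rw [← hset]; simp
  have h2 : η' ∈ ({ξ, η} : Finset F) := by rw [← hset]; simp
  have h3 : ξ ∈ ({ξ', η'} : Finset F) := by rw [hset]; simp
  have h4 : η ∈ ({ξ', η'} : Finset F) := by rw [hset]; simp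
  simp only [Finset.mem_insert, Finset.mem_singleton] at h1 h2 h3 h4
  rcases h1 with h1 | h1
  · rcases h2 with h2 | h2
    · subst h1; subst h2
      rcases h4 with h4 | h4
      · exact Or.inl ⟨rfl, h4.symm⟩
      · exact Or.inl ⟨rfl, h4.symm⟩
    · exact Or.inl ⟨h1, h2⟩
  · rcases h2 with h2 | h2
    · exact Or.inr ⟨h1, h2⟩
    · subst h1; subst h2
      rcases h3 with h3 | h3
      · exact Or.inr ⟨rfl, h3.symm⟩
      · exact Or.inr ⟨rfl, h3.symm⟩

/-- The number of pairs `(g, h)` in `GL_2(𝔽_q)` with `g ∼ r(ξ)`, `h ∼ r(η)` and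
`g·h = diag(ξ′, η′)` (where `ξ′, η′ ∉ {0, 1}`): it is `q² + q` if
`ξ = η = ξ′ = η′`; `2q - 1` if `ξ′ ≠ η′` and `{ξ′, η′} = {ξ, η}`; `q - 1` if
`ξ′η′ = ξη`, `ξ′ ≠ η′` and `{ξ′, η′} ≠ {ξ, η}`; and `0` otherwise. -/
theorem structure_constant_two_reflections_diag (q : ℕ) (hq : Fintype.card F = q)
    (ξ η ξ' η' : F) (hξ : ξ ≠ 0) (hη : η ≠ 0)
    (hξ'0 : ξ' ≠ 0) (hξ'1 : ξ' ≠ 1) (hη'0 : η' ≠ 0) (hη'1 : η' ≠ 1) :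
    Nat.card {gh : GL (Fin 2) F × GL (Fin 2) F |
      (∃ z : GL (Fin 2) F,
        ((z * gh.1 * z⁻¹ : GL (Fin 2) F) : Matrix (Fin 2) (Fin 2) F) = refl2 ξ) ∧
      (∃ z : GL (Fin 2) F,
        ((z * gh.2 * z⁻¹ : GL (Fin 2) F) : Matrix (Fin 2) (Fin 2) F) = refl2 η) ∧
      ((gh.1 * gh.2 : GL (Fin 2) F) : Matrix (Fin 2) (Fin 2) F) = !![ξ', 0; 0, η']} =
    if ξ = η ∧ ξ' = ξ ∧ η' = ξ then q ^ 2 + q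
    else if ξ' ≠ η' ∧ ({ξ', η'} : Finset F) = {ξ, η} then 2 * q - 1
    else if ξ' * η' = ξ * η ∧ ξ' ≠ η' then q - 1
    else 0 := by
  subst hq
  rw [card_S ξ η ξ' η' hξ hη hξ'0 hη'0]
  by_cases hall : ξ = η ∧ ξ' = ξ ∧ η' = ξ
  · rw [if_pos hall]
    obtain ⟨h1, h2, h3⟩ := hall
    rw [h2, h3, ← h1]
    exact card_pred_all ξ hξ (h2 ▸ hξ'1)
  · rw [if_neg hall]
    by_cases hd : ξ' = η'
    · rw [if_neg (fun hc => hc.1 hd), if_neg (fun hc => hc.2 hd)]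
      rw [Nat.card_eq_zero]
      left
      rw [isEmpty_subtype]
      intro m hm
      obtain ⟨ht, hdet, hm1, hE, htr, hmD⟩ := hm
      apply hall
      subst hd
      rw [Matrix.trace_fin_two] at ht
      have hs : ξ' * (ξ + 1) = ξ * (η + 1) := by linear_combination htr - ξ' * ht
      have hz : (ξ' - 1) * (ξ' - ξ) = 0 := by linear_combination hE - hs
      have hξ'ξ : ξ' = ξ := by
        rcases mul_eq_zero.mp hz with h | h
        · exact absurd (sub_eq_zero.mp h) hξ'1
        · exact sub_eq_zero.mp h
      have hξ'η : ξ' = η := by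
        apply mul_left_cancel₀ hξ'0
        linear_combination hE - η * hξ'ξ
      exact ⟨hξ'ξ.symm.trans hξ'η, hξ'ξ, hξ'ξ⟩
    · by_cases hset : ({ξ', η'} : Finset F) = {ξ, η}
      · rw [if_pos ⟨hd, hset⟩]
        have hξη : ξ ≠ η := by
          rintro rfl
          rcases pair_eq_cases hd hset with ⟨ha, hb⟩ | ⟨ha, hb⟩ <;> exact hd (ha.trans hb.symm)
        rcases pair_eq_cases hd hset with ⟨ha, hb⟩ | ⟨ha, hb⟩
        · rw [ha, hb]
          rw [card_pred_forced ξ η ξ η ξ 1 0 (by ring) (by ring) rfl (by ring) ?_ ?_ ?_,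
            card_pairs, if_pos rfl]
          · intro a d hsum heq
            have h' : a * (η - ξ) = ξ * (η - ξ) := by linear_combination heq - ξ * hsum
            exact mul_right_cancel₀ (sub_ne_zero.mpr (Ne.symm hξη)) h'
          · rintro ⟨h1, -, -⟩; exact (ha ▸ hξ'1) h1
          · rintro ⟨-, h2, -⟩; exact (hb ▸ hη'1) h2.symm
        · rw [ha, hb]
          rw [card_pred_forced ξ η η ξ 1 ξ 0 (by ring) (by ring) (by ring) (by ring) ?_ ?_ ?_,
            card_pairs, if_pos rfl]
          · intro a d hsum heq
            have h' : a * (ξ - η) = 1 * (ξ - η) := by linear_combination heq - η * hsum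
            exact mul_right_cancel₀ (sub_ne_zero.mpr hξη) h'
          · rintro ⟨-, h2, -⟩; exact (hb ▸ hη'1) h2
          · rintro ⟨h1, -, -⟩; exact (ha ▸ hξ'1) h1.symm
      · by_cases hE : ξ' * η' = ξ * η
        · rw [if_neg (fun hc => hset hc.2), if_pos ⟨hE, hd⟩]
          set a₀ : F := (ξ * η + ξ - (ξ + 1) * ξ') / (η' - ξ') with ha₀def
          have hd' : η' - ξ' ≠ 0 := sub_ne_zero.mpr (Ne.symm hd)
          have ha₀ : a₀ * (η' - ξ') = ξ * η + ξ - (ξ + 1) * ξ' := div_mul_cancel₀ _ hd'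
          have ha1 : a₀ ≠ 1 := by
            intro h
            rw [h, one_mul] at ha₀
            have hz : (ξ' - 1) * (η' - ξ) = 0 := by linear_combination hE - ha₀
            rcases mul_eq_zero.mp hz with h' | h'
            · exact hξ'1 (sub_eq_zero.mp h')
            · have hη'ξ : η' = ξ := sub_eq_zero.mp h'
              have hξ'η : ξ' = η := by
                apply mul_right_cancel₀ hξ
                linear_combination hE - ξ' * hη'ξ
              apply hset
              rw [hξ'η, hη'ξ, Finset.pair_comm]
          have haξ : a₀ ≠ ξ := by
            intro h
            rw [h] at ha₀
            have hz : (η' - 1) * (ξ' - ξ) = 0 := by linear_combination hE - ha₀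
            rcases mul_eq_zero.mp hz with h' | h'
            · exact hη'1 (sub_eq_zero.mp h')
            · have hξ'ξ : ξ' = ξ := sub_eq_zero.mp h'
              have hη'η : η' = η := by
                apply mul_left_cancel₀ hξ
                linear_combination hE - η' * hξ'ξ
              apply hset
              rw [hξ'ξ, hη'η]
          set k : F := a₀ * (ξ + 1 - a₀) - ξ with hkdef
          have hk : k ≠ 0 := by
            intro hk0
            have hz : (a₀ - 1) * (a₀ - ξ) = 0 := by linear_combination -hk0
            rcases mul_eq_zero.mp hz with h' | h'
            · exact ha1 (sub_eq_zero.mp h')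
            · exact haξ (sub_eq_zero.mp h')
          rw [card_pred_forced ξ η ξ' η' a₀ (ξ + 1 - a₀) k (by ring) (by rw [hkdef]; ring) hE
            (by linear_combination ha₀) ?_ ?_ ?_, card_pairs, if_neg hk]
          · intro a d hsum heq
            apply mul_right_cancel₀ hd'
            rw [ha₀]
            linear_combination heq - ξ' * hsum
          · rintro ⟨-, -, h3⟩; exact hk h3
          · rintro ⟨-, -, h3⟩; exact hk h3
        · rw [if_neg (fun hc => hset hc.2), if_neg (fun hc => hE hc.1)]
          rw [Nat.card_eq_zero]
          left
          rw [isEmpty_subtype]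
          intro m hm
          exact hE hm.2.2.2.1
end
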